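/- arXiv:2103.03909 — 3 statements merged into one kernel-verified Lean document; each statement's English description precedes it below -/
import Mathlib

section
/- The system of linear equations (1 + J·K_x)·ψ(x) = J·Σ_{y∈Λ_N : y∼x} ψ(y) + (h_x + λ_N(x) + J·Σ_{y∉Λ_N, y∼x} φ̄_y), for x ∈ Λ_N, has a unique solution ψ_N : Λ_N → ℝ, and this solution is given by the absolutely convergent series ψ_N(x) = α(x) + Σ_{n≥1} Σ_{(y_1,…,y_n) ∈ Λ_N^n} ( Π_{i=0}^{n−1} [K⁻_{y_i}·J/(1 + K_{y_i}·J)]·q(y_i, y_{i+1}) )·α(y_n), where y_0 = x. -/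
open MeasureTheory Real Filter

/-- Points of `ℤ³`. -/
abbrev Z3 : Type := ℤ × ℤ × ℤ

/-- Nearest-neighbor relation `x ∼ y`, i.e. `|x − y| = 1`. -/
def adj (x y : Z3) : Prop :=
  |x.1 - y.1| + |x.2.1 - y.2.1| + |x.2.2 - y.2.2| = 1

instance : DecidableRel adj := fun x y => by unfold adj; infer_instance

/-- The six nearest neighbors of a site. -/
def nbrs (x : Z3) : Finset Z3 :=
  {(x.1 + 1, x.2), (x.1 - 1, x.2), (x.1, x.2.1 + 1, x.2.2), (x.1, x.2.1 - 1, x.2.2),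
    (x.1, x.2.1, x.2.2 + 1), (x.1, x.2.1, x.2.2 - 1)}

/-- `Λ_N = {x : −2N ≤ x₁ < 2N, −N ≤ x₂ < N, −N ≤ x₃ < N}`. -/
noncomputable def Lam (N : ℕ) : Finset Z3 :=
  Finset.Icc (-(2 * N : ℤ)) (2 * N - 1) ×ˢ
    (Finset.Icc (-(N : ℤ)) (N - 1) ×ˢ Finset.Icc (-(N : ℤ)) (N - 1))

/-- `Ω_N = Λ_N ∪ Ω_N^left ∪ Ω_N^right`. -/
def inOmega (N : ℕ) (y : Z3) : Prop :=
  y ∈ Lam N ∨ y.1 < -(2 * N : ℤ) ∨ (2 * N : ℤ) ≤ y.1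

noncomputable instance (N : ℕ) : DecidablePred (inOmega N) := fun y => by unfold inOmega; infer_instance

/-- `K_x = #{y ∈ Ω_N : y ∼ x}`. -/
noncomputable def Kx (N : ℕ) (x : Z3) : ℕ := ((nbrs x).filter (inOmega N)).card

/-- `K⁻_x = #{y ∈ Λ_N : y ∼ x}`. -/
noncomputable def Km (N : ℕ) (x : Z3) : ℕ := ((nbrs x).filter (· ∈ Lam N)).card

/-- `h_x = h·1_{x₁<0}`. -/
noncomputable def hfun (h : ℝ) (x : Z3) : ℝ := if x.1 < 0 then h else 0

/-- the boundary configuration `φ̄` (equal to `λ+h` on the left reservoir, `−λ` on the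
right reservoir, and irrelevant = 0 elsewhere outside `Λ_N`). -/
noncomputable def phibar (lam h : ℝ) (N : ℕ) (y : Z3) : ℝ :=
  if y.1 < -(2 * N : ℤ) then lam + h else if (2 * N : ℤ) ≤ y.1 then -lam else 0

/-- `λ_N(x) = −λ(2x₁+1)/(4N+1)`. -/
noncomputable def lamN (lam : ℝ) (N : ℕ) (x : Z3) : ℝ :=
  -lam * (2 * x.1 + 1) / (4 * N + 1)

/-- `J·Σ_{y∉Λ_N, y∼x} φ̄_y`. -/
noncomputable def bterm (J h lam : ℝ) (N : ℕ) (x : Z3) : ℝ :=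
  J * ∑ y ∈ (nbrs x).filter (· ∉ Lam N), phibar lam h N y

/-- `α(z) = (h_z + λ_N(z) + J·Σ_{y∉Λ_N, y∼z} φ̄_y)/(1 + K_z·J)`. -/
noncomputable def alph (J h lam : ℝ) (N : ℕ) (z : Z3) : ℝ :=
  (hfun h z + lamN lam N z + bterm J h lam N z) / (1 + (Kx N z : ℝ) * J)

/-- `q(x,y) = (1/K⁻_x)·1_{y∈Λ_N, y∼x}`. -/
noncomputable def qker (N : ℕ) (x y : Z3) : ℝ :=
  (1 / (Km N x : ℝ)) * (if y ∈ Lam N ∧ adj x y then 1 else 0)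

/-- Sites of `Λ_N`. -/
abbrev LamT (N : ℕ) : Type := {z : Z3 // z ∈ Lam N}

/-- one factor `[K⁻_{x}·J/(1 + K_{x}·J)]·q(x, y)` of the series. -/
noncomputable def wfac (J : ℝ) (N : ℕ) (x y : Z3) : ℝ :=
  ((Km N x : ℝ) * J / (1 + (Kx N x : ℝ) * J)) * qker N x y

/-- the term of order `n+1` of the series:
`Σ_{(y_1,…,y_{n+1}) ∈ Λ_N^{n+1}} ( Π_{i=0}^{n} [K⁻_{y_i}·J/(1 + K_{y_i}·J)]·q(y_i, y_{i+1}) )·α(y_{n+1})`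
with `y_0 = x`. -/
noncomputable def sTerm (J h lam : ℝ) (N : ℕ) (x : Z3) (n : ℕ) : ℝ :=
  ∑ y : Fin (n + 1) → LamT N,
    (∏ i : Fin (n + 1),
        wfac J N ((Fin.cons x fun j => (y j : Z3) : Fin (n + 2) → Z3) i.castSucc)
          ((Fin.cons x fun j => (y j : Z3) : Fin (n + 2) → Z3) i.succ)) *
      alph J h lam N (y (Fin.last n) : Z3)

/-- `ψ` solves the linear system
`(1 + J·K_x)·ψ(x) = J·Σ_{y∈Λ_N : y∼x} ψ(y) + (h_x + λ_N(x) + J·Σ_{y∉Λ_N, y∼x} φ̄_y)`. -/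
def IsSol (J h lam : ℝ) (N : ℕ) (ψ : LamT N → ℝ) : Prop :=
  ∀ x : LamT N,
    (1 + J * (Kx N x : ℝ)) * ψ x =
      J * ∑ y ∈ ((nbrs (x : Z3)).filter (· ∈ Lam N)).attach,
          ψ ⟨(y : Z3), (Finset.mem_filter.mp y.2).2⟩ +
        (hfun h x + lamN lam N x + bterm J h lam N x)

section Aux
variable {N : ℕ} {J h lam : ℝ}

lemma adj_iff_mem_nbrs (x y : Z3) : adj x y ↔ y ∈ nbrs x := by
  simp only [adj, nbrs, Finset.mem_insert, Finset.mem_singleton, Prod.ext_iff,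
    Int.abs_eq_natAbs]
  omega

lemma Km_le_Kx (N : ℕ) (x : Z3) : Km N x ≤ Kx N x := by
  apply Finset.card_le_card
  intro y hy
  simp only [Finset.mem_filter] at hy ⊢
  exact ⟨hy.1, Or.inl hy.2⟩

lemma nbrs_card_le (x : Z3) : (nbrs x).card ≤ 6 := by
  unfold nbrs
  refine (Finset.card_insert_le _ _).trans ?_
  refine Nat.add_le_add_right ((Finset.card_insert_le _ _).trans ?_) 1
  refine Nat.add_le_add_right ((Finset.card_insert_le _ _).trans ?_) 1
  refine Nat.add_le_add_right ((Finset.card_insert_le _ _).trans ?_) 1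
  refine Nat.add_le_add_right ((Finset.card_insert_le _ _).trans ?_) 1
  simp

lemma Kx_le_six (N : ℕ) (x : Z3) : Kx N x ≤ 6 :=
  (Finset.card_filter_le _ _).trans (nbrs_card_le x)

lemma denom_pos (hJ : 0 < J) (x : Z3) : 0 < 1 + (Kx N x : ℝ) * J := by positivity

lemma wfac_eq (hJ : 0 < J) (x y : Z3) :
    wfac J N x y = (J / (1 + (Kx N x : ℝ) * J)) *
      (if y ∈ (nbrs x).filter (· ∈ Lam N) then 1 else 0) := by
  have hmem : (y ∈ Lam N ∧ adj x y) ↔ y ∈ (nbrs x).filter (· ∈ Lam N) := by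
    rw [Finset.mem_filter, adj_iff_mem_nbrs]
    tauto
  unfold wfac qker
  rw [if_congr hmem rfl rfl]
  by_cases hy : y ∈ (nbrs x).filter (· ∈ Lam N)
  · have hK : (Km N x : ℝ) ≠ 0 := by
      have : 0 < Km N x := Finset.card_pos.2 ⟨y, hy⟩
      exact_mod_cast this.ne'
    rw [if_pos hy]
    field_simp
  · rw [if_neg hy]; ring

lemma wfac_nonneg (hJ : 0 < J) (x y : Z3) : 0 ≤ wfac J N x y := by
  rw [wfac_eq hJ]
  have := denom_pos (N := N) hJ x
  positivity

lemma sum_wfac_mul (hJ : 0 < J) (x : Z3) (f : Z3 → ℝ) :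
    ∑ y : LamT N, wfac J N x ↑y * f ↑y =
      (J / (1 + (Kx N x : ℝ) * J)) * ∑ y ∈ (nbrs x).filter (· ∈ Lam N), f y := by
  have hsub : (nbrs x).filter (· ∈ Lam N) ⊆ Lam N := fun y hy =>
    (Finset.mem_filter.mp hy).2
  calc ∑ y : LamT N, wfac J N x ↑y * f ↑y
      = ∑ y ∈ Lam N, wfac J N x y * f y :=
        Finset.sum_coe_sort (Lam N) (fun y => wfac J N x y * f y)
    _ = ∑ y ∈ Lam N, (J / (1 + (Kx N x : ℝ) * J)) *
          (if y ∈ (nbrs x).filter (· ∈ Lam N) then f y else 0) := by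
        refine Finset.sum_congr rfl fun y _ => ?_
        rw [wfac_eq hJ]
        by_cases hy : y ∈ (nbrs x).filter (· ∈ Lam N) <;> simp [hy]
    _ = (J / (1 + (Kx N x : ℝ) * J)) * ∑ y ∈ (nbrs x).filter (· ∈ Lam N), f y := by
        rw [← Finset.mul_sum, Finset.sum_ite_mem,
          Finset.inter_eq_right.mpr hsub]

lemma sum_wfac_le (hJ : 0 < J) (x : Z3) :
    ∑ y : LamT N, wfac J N x ↑y ≤ 6 * J / (1 + 6 * J) := by
  have h1 : ∑ y : LamT N, wfac J N x ↑y
      = (J / (1 + (Kx N x : ℝ) * J)) * (Km N x : ℝ) := by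
    have := sum_wfac_mul (N := N) hJ x (fun _ => (1:ℝ))
    simpa [Km] using this
  rw [h1]
  have hd := denom_pos (N := N) hJ x
  rw [div_mul_eq_mul_div, div_le_div_iff₀ hd (by positivity)]
  have h2 : (Km N x : ℝ) ≤ (Kx N x : ℝ) := by exact_mod_cast Km_le_Kx N x
  have h3 : (Km N x : ℝ) ≤ 6 := by
    have := (Km_le_Kx N x).trans (Kx_le_six N x); exact_mod_cast this
  have h4 : (0:ℝ) ≤ (Km N x : ℝ) := Nat.cast_nonneg _
  nlinarith [mul_le_mul_of_nonneg_left h2 (by positivity : (0:ℝ) ≤ 6*J*J),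
    mul_le_mul_of_nonneg_right h3 hJ.le]

end Aux
section Aux2
variable {N : ℕ} {J h lam : ℝ}

lemma lamT_nonempty (hN : 1 ≤ N) : Nonempty (LamT N) := by
  refine ⟨⟨((0:ℤ), (0:ℤ), (0:ℤ)), ?_⟩⟩
  simp only [Lam, Finset.mem_product, Finset.mem_Icc]
  omega

lemma isSol_iff (hJ : 0 < J) (ψ : LamT N → ℝ) :
    IsSol J h lam N ψ ↔ ∀ x : LamT N,
      ψ x = (∑ y : LamT N, wfac J N ↑x ↑y * ψ y) + alph J h lam N ↑x := by
  have key : ∀ x : LamT N,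
      ∑ y : LamT N, wfac J N ↑x ↑y * ψ y =
        (J / (1 + (Kx N ↑x : ℝ) * J)) *
          ∑ y ∈ ((nbrs (x : Z3)).filter (· ∈ Lam N)).attach,
            ψ ⟨(y : Z3), (Finset.mem_filter.mp y.2).2⟩ := by
    intro x
    set Ψ : Z3 → ℝ := fun z => if hz : z ∈ Lam N then ψ ⟨z, hz⟩ else 0 with hΨ
    have h1 : ∑ y : LamT N, wfac J N ↑x ↑y * ψ y
        = ∑ y : LamT N, wfac J N ↑x ↑y * Ψ ↑y := by
      refine Finset.sum_congr rfl fun y _ => ?_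
      simp [hΨ, y.2]
    have h2 : ∑ y ∈ ((nbrs (x : Z3)).filter (· ∈ Lam N)).attach,
          ψ ⟨(y : Z3), (Finset.mem_filter.mp y.2).2⟩
        = ∑ y ∈ (nbrs (x : Z3)).filter (· ∈ Lam N), Ψ y := by
      rw [← Finset.sum_attach ((nbrs (x : Z3)).filter (· ∈ Lam N)) Ψ]
      refine Finset.sum_congr rfl fun y _ => ?_
      simp [hΨ, (Finset.mem_filter.mp y.2).2]
    rw [h1, h2, sum_wfac_mul hJ]
  constructor
  · intro hs x
    have hx := hs x
    have hd := denom_pos (N := N) hJ (x : Z3)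
    rw [key x]
    unfold alph
    rw [mul_comm J ((Kx N ↑x : ℝ))] at hx
    field_simp
    linarith [hx]
  · intro hs x
    have hx := hs x
    have hd := denom_pos (N := N) hJ (x : Z3)
    rw [key x] at hx
    unfold alph at hx
    rw [mul_comm J ((Kx N ↑x : ℝ))]
    field_simp at hx
    linarith [hx]

lemma sTerm_zero (x : Z3) :
    sTerm J h lam N x 0 = ∑ y : LamT N, wfac J N x ↑y * alph J h lam N ↑y := by
  unfold sTerm
  rw [← (Equiv.funUnique (Fin 1) (LamT N)).symm.sum_comp]
  simp [Fin.prod_univ_one]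

lemma sTerm_succ (x : Z3) (n : ℕ) :
    sTerm J h lam N x (n + 1) =
      ∑ a : LamT N, wfac J N x ↑a * sTerm J h lam N ↑a n := by
  unfold sTerm
  rw [← (Fin.consEquiv (fun _ : Fin (n + 2) => LamT N)).sum_comp]
  rw [Fintype.sum_prod_type]
  refine Finset.sum_congr rfl fun a _ => ?_
  rw [Finset.mul_sum]
  refine Finset.sum_congr rfl fun y _ => ?_
  have hcons : (fun j => ((Fin.consEquiv (fun _ : Fin (n + 2) => LamT N)) (a, y) j : Z3))
      = Fin.cons (↑a) (fun j => (y j : Z3)) := by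
    funext j
    refine Fin.cases ?_ (fun i => ?_) j <;> simp [Fin.consEquiv]
  rw [hcons]
  rw [Fin.prod_univ_succ]
  simp only [Fin.consEquiv_apply, ← Fin.succ_castSucc, ← Fin.succ_last,
    Fin.castSucc_zero, Fin.cons_zero, Fin.cons_succ]
  ring
end Aux2
section Aux3
variable {N : ℕ} {J h lam : ℝ}

lemma contraction_bound (hJ : 0 < J) (f : LamT N → ℝ) (B : ℝ) (hB : 0 ≤ B)
    (hf : ∀ y : LamT N, |f y| ≤ B) (x : Z3) :
    |∑ y : LamT N, wfac J N x ↑y * f y| ≤ (6 * J / (1 + 6 * J)) * B := by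
  calc |∑ y : LamT N, wfac J N x ↑y * f y|
      ≤ ∑ y : LamT N, |wfac J N x ↑y * f y| := Finset.abs_sum_le_sum_abs _ _
    _ ≤ ∑ y : LamT N, wfac J N x ↑y * B := by
        refine Finset.sum_le_sum fun y _ => ?_
        rw [abs_mul, abs_of_nonneg (wfac_nonneg hJ _ _)]
        exact mul_le_mul_of_nonneg_left (hf y) (wfac_nonneg hJ _ _)
    _ = (∑ y : LamT N, wfac J N x ↑y) * B := by rw [Finset.sum_mul]
    _ ≤ (6 * J / (1 + 6 * J)) * B :=
        mul_le_mul_of_nonneg_right (sum_wfac_le hJ x) hB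

lemma alph_abs_le (y : LamT N) :
    |alph J h lam N ↑y| ≤ ∑ z : LamT N, |alph J h lam N ↑z| :=
  Finset.single_le_sum (f := fun z : LamT N => |alph J h lam N ↑z|)
    (fun z _ => abs_nonneg _) (Finset.mem_univ y)

lemma sTerm_bound (hJ : 0 < J) (n : ℕ) (x : Z3) :
    |sTerm J h lam N x n| ≤
      (6 * J / (1 + 6 * J)) ^ (n + 1) * (∑ z : LamT N, |alph J h lam N ↑z|) := by
  have hA : 0 ≤ ∑ z : LamT N, |alph J h lam N ↑z| :=
    Finset.sum_nonneg fun z _ => abs_nonneg _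
  have hc0 : (0:ℝ) ≤ 6 * J / (1 + 6 * J) := by positivity
  induction n generalizing x with
  | zero =>
      rw [sTerm_zero, pow_one]
      exact contraction_bound hJ (fun y : LamT N => alph J h lam N ↑y) _ hA (fun y => alph_abs_le y) x
  | succ n ih =>
      rw [sTerm_succ]
      calc |∑ a : LamT N, wfac J N x ↑a * sTerm J h lam N ↑a n|
          ≤ (6 * J / (1 + 6 * J)) *
              ((6 * J / (1 + 6 * J)) ^ (n + 1) * (∑ z : LamT N, |alph J h lam N ↑z|)) :=
            contraction_bound hJ (fun a : LamT N => sTerm J h lam N ↑a n) _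
              (by positivity) (fun y => ih ↑y) x
        _ = (6 * J / (1 + 6 * J)) ^ (n + 1 + 1) * (∑ z : LamT N, |alph J h lam N ↑z|) := by
            ring

lemma sTerm_summable_abs (hJ : 0 < J) (x : Z3) :
    Summable (fun n : ℕ => |sTerm J h lam N x n|) := by
  have hc0 : (0:ℝ) ≤ 6 * J / (1 + 6 * J) := by positivity
  have hc1 : 6 * J / (1 + 6 * J) < 1 := by
    rw [div_lt_one (by positivity)]; linarith
  have hg : Summable (fun n : ℕ =>
      (6 * J / (1 + 6 * J)) ^ (n + 1) * (∑ z : LamT N, |alph J h lam N ↑z|)) := by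
    have := (summable_geometric_of_lt_one hc0 hc1).mul_left
      ((6 * J / (1 + 6 * J)) * (∑ z : LamT N, |alph J h lam N ↑z|))
    convert this using 2 with n
    · rfl
    ring
  exact hg.of_nonneg_of_le (fun n => abs_nonneg _) (fun n => sTerm_bound hJ n x)

lemma sTerm_summable (hJ : 0 < J) (x : Z3) :
    Summable (fun n : ℕ => sTerm J h lam N x n) :=
  (sTerm_summable_abs hJ x).of_abs

lemma psistar_fixed (hJ : 0 < J) (x : LamT N) :
    alph J h lam N ↑x + ∑' n : ℕ, sTerm J h lam N ↑x n =
      (∑ y : LamT N, wfac J N ↑x ↑y *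
        (alph J h lam N ↑y + ∑' n : ℕ, sTerm J h lam N ↑y n)) + alph J h lam N ↑x := by
  have h1 : ∑ y : LamT N, wfac J N ↑x ↑y *
      (alph J h lam N ↑y + ∑' n : ℕ, sTerm J h lam N ↑y n)
      = (∑ y : LamT N, wfac J N ↑x ↑y * alph J h lam N ↑y) +
        ∑ y : LamT N, wfac J N ↑x ↑y * ∑' n : ℕ, sTerm J h lam N ↑y n := by
    rw [← Finset.sum_add_distrib]
    exact Finset.sum_congr rfl fun y _ => by ring
  have h2 : ∑ y : LamT N, wfac J N ↑x ↑y * ∑' n : ℕ, sTerm J h lam N ↑y n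
      = ∑' n : ℕ, sTerm J h lam N ↑x (n + 1) := by
    have h3 : ∀ y : LamT N, wfac J N ↑x ↑y * ∑' n : ℕ, sTerm J h lam N ↑y n
        = ∑' n : ℕ, wfac J N ↑x ↑y * sTerm J h lam N ↑y n :=
      fun y => (tsum_mul_left).symm
    simp_rw [h3]
    have h4 := Summable.tsum_finsetSum (s := Finset.univ)
      (f := fun (y : LamT N) (n : ℕ) => wfac J N ↑x ↑y * sTerm J h lam N ↑y n)
      (fun y _ => (sTerm_summable hJ (↑y : Z3)).mul_left _)
    rw [← h4]
    exact tsum_congr fun n => (sTerm_succ _ _).symm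
  rw [h1, ← sTerm_zero, h2, Summable.tsum_eq_zero_add (sTerm_summable hJ (↑x))]
  ring

lemma fixed_unique (hN : 1 ≤ N) (hJ : 0 < J) (ψ φ : LamT N → ℝ)
    (hψ : ∀ x : LamT N, ψ x = (∑ y : LamT N, wfac J N ↑x ↑y * ψ y) + alph J h lam N ↑x)
    (hφ : ∀ x : LamT N, φ x = (∑ y : LamT N, wfac J N ↑x ↑y * φ y) + alph J h lam N ↑x) :
    ψ = φ := by
  have hne : Nonempty (LamT N) := lamT_nonempty hN
  set v : LamT N → ℝ := fun x => ψ x - φ x with hv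
  have hveq : ∀ x : LamT N, v x = ∑ y : LamT N, wfac J N ↑x ↑y * v y := by
    intro x
    have := hψ x
    have := hφ x
    simp only [hv]
    rw [hψ x, hφ x]
    simp only [mul_sub, Finset.sum_sub_distrib]
    ring
  obtain ⟨x0, -, hx0⟩ := Finset.exists_max_image Finset.univ (fun x => |v x|)
    ⟨Classical.arbitrary _, Finset.mem_univ _⟩
  have hc1 : 6 * J / (1 + 6 * J) < 1 := by
    rw [div_lt_one (by positivity)]; linarith
  have hb : |v x0| ≤ (6 * J / (1 + 6 * J)) * |v x0| := by
    conv_lhs => rw [hveq x0]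
    exact contraction_bound hJ v |v x0|
      (abs_nonneg _) (fun y => hx0 y (Finset.mem_univ y)) ↑x0
  have hzero : |v x0| = 0 := by nlinarith [abs_nonneg (v x0)]
  funext x
  have : |v x| ≤ 0 := hzero ▸ hx0 x (Finset.mem_univ x)
  have : v x = 0 := abs_eq_zero.mp (le_antisymm this (abs_nonneg _))
  simpa [hv, sub_eq_zero] using this

end Aux3

theorem statement0 (N : ℕ) (hN : 1 ≤ N) (J β h lam : ℝ)
    (hJ : 0 < J) (hβ : 0 < β) (hh : h < 0) (hlam : 0 < lam) :
    (∃! ψ : LamT N → ℝ, IsSol J h lam N ψ) ∧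
      ∀ ψ : LamT N → ℝ, IsSol J h lam N ψ →
        ∀ x : LamT N,
          Summable (fun n : ℕ => |sTerm J h lam N (x : Z3) n|) ∧
            ψ x = alph J h lam N (x : Z3) + ∑' n : ℕ, sTerm J h lam N (x : Z3) n := by
  set ψstar : LamT N → ℝ :=
    fun x => alph J h lam N ↑x + ∑' n : ℕ, sTerm J h lam N ↑x n with hψs
  have hfix : ∀ x : LamT N,
      ψstar x = (∑ y : LamT N, wfac J N ↑x ↑y * ψstar y) + alph J h lam N ↑x := by
    intro x
    simpa only [hψs] using psistar_fixed (N := N) (h := h) (lam := lam) hJ x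
  have hsol : IsSol J h lam N ψstar := (isSol_iff hJ ψstar).mpr hfix
  have huniq : ∀ φ : LamT N → ℝ, IsSol J h lam N φ → φ = ψstar := fun φ hφ =>
    fixed_unique hN hJ φ ψstar ((isSol_iff hJ φ).mp hφ) hfix
  refine ⟨⟨ψstar, hsol, huniq⟩, ?_⟩
  intro ψ hψ x
  refine ⟨sTerm_summable_abs hJ ↑x, ?_⟩
  rw [huniq ψ hψ]
end

section
/- Fix α ∈ (0, 1/2) and ε > 0, and for each integer N ≥ 1 set M = ⌊N^α⌋, R_ε = M^{2+ε}, and Σ⁺_N = {y ∈ Z^3 : y_1 = N, |y_2| ≤ M, |y_3| ≤ M}. Then lim_{N→∞} sup_{x ∈ Z^3 : x_1 ≥ N + R_ε} P_x[ ∃ n ≥ 0 : z_n ∈ Σ⁺_N ] = 0; i.e., the probability that the simple random walk started at x ever visits Σ⁺_N tends to 0 uniformly over starting points x with x_1 ≥ N + R_ε. -/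
open Real Filter

/-- `P_x[∃ k ≤ n : z_k ∈ S]`: the probability that the simple random walk `(z_k)` on `ℤ³`
(one-step transition probabilities `p(x,y) = (1/6)·1_{x∼y}`) started at `x` visits `S`
within the first `n` steps, defined by the Markov-property recursion. -/
noncomputable def hitBy (S : Finset Z3) : ℕ → Z3 → ℝ
  | 0, x => if x ∈ S then 1 else 0
  | n + 1, x => if x ∈ S then 1 else ∑ y ∈ nbrs x, (1 / 6 : ℝ) * hitBy S n y

/-- `P_x[∃ n ≥ 0 : z_n ∈ S]`: the probability that the simple random walk started at `x`
ever visits `S`; by monotone convergence it is the supremum over `n` of the probabilities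
of visiting `S` within `n` steps. -/
noncomputable def hitProb (S : Finset Z3) (x : Z3) : ℝ := ⨆ n : ℕ, hitBy S n x

/-- `Σ⁺_N = {y ∈ ℤ³ : y₁ = N, |y₂| ≤ M, |y₃| ≤ M}`. -/
noncomputable def SigPlus (N M : ℕ) : Finset Z3 :=
  {(N : ℤ)} ×ˢ (Finset.Icc (-(M : ℤ)) (M : ℤ) ×ˢ Finset.Icc (-(M : ℤ)) (M : ℤ))



set_option maxHeartbeats 1000000

lemma polyQ (h : ℝ) (hb : |h| ≤ 1/4) :
    1 ≤ (1+h) * (1 - h/4 + 5/32*h^2 - 15/128*h^3 + 1/2*h^4)^4 := by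
  have key : ∀ k : ℕ, |h^k| ≤ (1/4)^k := fun k => by
    rw [abs_pow]; exact pow_le_pow_left₀ (abs_nonneg h) hb k
  have b1 := abs_le.mp (key 1)
  have b2 := abs_le.mp (key 2)
  have b3 := abs_le.mp (key 3)
  have b4 := abs_le.mp (key 4)
  have b5 := abs_le.mp (key 5)
  have b6 := abs_le.mp (key 6)
  have b7 := abs_le.mp (key 7)
  have b8 := abs_le.mp (key 8)
  have b9 := abs_le.mp (key 9)
  have b10 := abs_le.mp (key 10)
  have b11 := abs_le.mp (key 11)
  have b12 := abs_le.mp (key 12)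
  have b13 := abs_le.mp (key 13)
  norm_num at b1 b2 b3 b4 b5 b6 b7 b8 b9 b10 b11 b12 b13
  have hQ : 0 ≤ (829/512:ℝ) + (373/512)*h - (2901/8192)*h^2 + (3937/16384)*h^3
      + (839401/1048576)*h^4 + (540941/524288)*h^5 - (2968529/8388608)*h^6
      + (3415139/16777216)*h^7 + (34910993/268435456)*h^8 + (121983681/268435456)*h^9
      - (88527/1048576)*h^10 + (1315/32768)*h^11 + (1/256)*h^12 + (1/16)*h^13 := by
    linarith
  have e : (1+h) * (1 - h/4 + 5/32*h^2 - 15/128*h^3 + 1/2*h^4)^4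
      = 1 + h^4 * ((829/512:ℝ) + (373/512)*h - (2901/8192)*h^2 + (3937/16384)*h^3
      + (839401/1048576)*h^4 + (540941/524288)*h^5 - (2968529/8388608)*h^6
      + (3415139/16777216)*h^7 + (34910993/268435456)*h^8 + (121983681/268435456)*h^9
      - (88527/1048576)*h^10 + (1315/32768)*h^11 + (1/256)*h^12 + (1/16)*h^13) := by
    ring
  nlinarith [mul_nonneg (pow_nonneg (sq_nonneg h) 2) hQ, sq_nonneg h]

lemma taylor4 (t a : ℝ) (ht : 100 ≤ t) (ha : |a| ≤ t/4) :
    (t+a) ^ (-(1/4):ℝ) ≤ t ^ (-(1/4):ℝ) *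
      ((t^4 - a*t^3/4 + 5/32*a^2*t^2 - 15/128*a^3*t + 1/2*a^4) / t^4) := by
  have ht0 : (0:ℝ) < t := by linarith
  set h : ℝ := a / t with hh
  have hb : |h| ≤ 1/4 := by
    rw [hh, abs_div, abs_of_pos ht0, div_le_iff₀ ht0]
    linarith
  have hb' := abs_le.mp hb
  have h1 : (0:ℝ) < 1 + h := by linarith
  have hP : (0:ℝ) < 1 - h/4 + 5/32*h^2 - 15/128*h^3 + 1/2*h^4 := by
    have b2 := abs_le.mp (by rw [abs_pow]; exact pow_le_pow_left₀ (abs_nonneg h) hb 2 : |h^2| ≤ (1/4)^2)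
    have b3 := abs_le.mp (by rw [abs_pow]; exact pow_le_pow_left₀ (abs_nonneg h) hb 3 : |h^3| ≤ (1/4)^3)
    have b4 := abs_le.mp (by rw [abs_pow]; exact pow_le_pow_left₀ (abs_nonneg h) hb 4 : |h^4| ≤ (1/4)^4)
    norm_num at b2 b3 b4
    linarith
  have hrw : t + a = t * (1 + h) := by rw [hh]; field_simp
  have hmul : (t + a) ^ (-(1/4):ℝ) = t ^ (-(1/4):ℝ) * (1+h) ^ (-(1/4):ℝ) := by
    rw [hrw, Real.mul_rpow ht0.le h1.le]
  have hkey : (1+h) ^ (-(1/4):ℝ) ≤ 1 - h/4 + 5/32*h^2 - 15/128*h^3 + 1/2*h^4 := by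
    have hpow : ((1+h) ^ (-(1/4):ℝ))^(4:ℕ) ≤ (1 - h/4 + 5/32*h^2 - 15/128*h^3 + 1/2*h^4)^(4:ℕ) := by
      have e1 : ((1+h) ^ (-(1/4):ℝ))^(4:ℕ) = (1+h)⁻¹ := by
        rw [← Real.rpow_natCast ((1+h) ^ (-(1/4):ℝ)) 4, ← Real.rpow_mul h1.le]
        norm_num [Real.rpow_neg_one]
      rw [e1, inv_eq_one_div, div_le_iff₀ h1]
      have := polyQ h hb
      nlinarith [this]
    exact le_of_pow_le_pow_left₀ (by norm_num) hP.le hpow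
  have hfr : (t^4 - a*t^3/4 + 5/32*a^2*t^2 - 15/128*a^3*t + 1/2*a^4) / t^4
      = 1 - h/4 + 5/32*h^2 - 15/128*h^3 + 1/2*h^4 := by
    rw [hh]; field_simp
  rw [hmul, hfr]
  exact mul_le_mul_of_nonneg_left hkey (Real.rpow_nonneg ht0.le _)

lemma numle (t b1 b2 b3 : ℝ) (ht : 100 ≤ t) (hq : b1^2 + b2^2 + b3^2 = t - 1)
    (hquart : b1^4 + b2^4 + b3^4 ≤ (t-1)^2) :
    (t^4 - (2*b1+1)*t^3/4 + 5/32*(2*b1+1)^2*t^2 - 15/128*(2*b1+1)^3*t + 1/2*(2*b1+1)^4)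
    + (t^4 - (1-2*b1)*t^3/4 + 5/32*(1-2*b1)^2*t^2 - 15/128*(1-2*b1)^3*t + 1/2*(1-2*b1)^4)
    + (t^4 - (2*b2+1)*t^3/4 + 5/32*(2*b2+1)^2*t^2 - 15/128*(2*b2+1)^3*t + 1/2*(2*b2+1)^4)
    + (t^4 - (1-2*b2)*t^3/4 + 5/32*(1-2*b2)^2*t^2 - 15/128*(1-2*b2)^3*t + 1/2*(1-2*b2)^4)
    + (t^4 - (2*b3+1)*t^3/4 + 5/32*(2*b3+1)^2*t^2 - 15/128*(2*b3+1)^3*t + 1/2*(2*b3+1)^4)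
    + (t^4 - (1-2*b3)*t^3/4 + 5/32*(1-2*b3)^2*t^2 - 15/128*(1-2*b3)^3*t + 1/2*(1-2*b3)^4)
    ≤ 6 * t^4 := by
  have e2 : (t^4 - (2*b1+1)*t^3/4 + 5/32*(2*b1+1)^2*t^2 - 15/128*(2*b1+1)^3*t + 1/2*(2*b1+1)^4)
    + (t^4 - (1-2*b1)*t^3/4 + 5/32*(1-2*b1)^2*t^2 - 15/128*(1-2*b1)^3*t + 1/2*(1-2*b1)^4)
    + (t^4 - (2*b2+1)*t^3/4 + 5/32*(2*b2+1)^2*t^2 - 15/128*(2*b2+1)^3*t + 1/2*(2*b2+1)^4)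
    + (t^4 - (1-2*b2)*t^3/4 + 5/32*(1-2*b2)^2*t^2 - 15/128*(1-2*b2)^3*t + 1/2*(1-2*b2)^4)
    + (t^4 - (2*b3+1)*t^3/4 + 5/32*(2*b3+1)^2*t^2 - 15/128*(2*b3+1)^3*t + 1/2*(2*b3+1)^4)
    + (t^4 - (1-2*b3)*t^3/4 + 5/32*(1-2*b3)^2*t^2 - 15/128*(1-2*b3)^3*t + 1/2*(1-2*b3)^4)
      = 6*t^4 + (-(3/2)*t^3 + (5/32)*(8*(b1^2+b2^2+b3^2)+6)*t^2
          - (15/128)*(24*(b1^2+b2^2+b3^2)+6)*t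
          + 16*(b1^4+b2^4+b3^4) + 24*(b1^2+b2^2+b3^2) + 3) := by
    ring
  rw [e2, hq]
  have ht3 : 100 * t^2 ≤ t^3 := by nlinarith
  nlinarith [hquart, ht3]

lemma absbnd (t b : ℝ) (ht : 100 ≤ t) (hb : b^2 ≤ t - 1) : |2*b+1| ≤ t/4 := by
  rw [abs_le]
  constructor <;> nlinarith [sq_nonneg b, sq_nonneg (t - 100)]

lemma core (t b1 b2 b3 : ℝ) (ht : 100 ≤ t) (hq : b1^2 + b2^2 + b3^2 = t - 1) :
    (t + (2*b1+1)) ^ (-(1/4):ℝ) + (t + (1-2*b1)) ^ (-(1/4):ℝ)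
    + (t + (2*b2+1)) ^ (-(1/4):ℝ) + (t + (1-2*b2)) ^ (-(1/4):ℝ)
    + (t + (2*b3+1)) ^ (-(1/4):ℝ) + (t + (1-2*b3)) ^ (-(1/4):ℝ)
    ≤ 6 * t ^ (-(1/4):ℝ) := by
  have ht0 : (0:ℝ) < t := by linarith
  have sq1 : b1^2 ≤ t - 1 := by nlinarith [sq_nonneg b2, sq_nonneg b3]
  have sq2 : b2^2 ≤ t - 1 := by nlinarith [sq_nonneg b1, sq_nonneg b3]
  have sq3 : b3^2 ≤ t - 1 := by nlinarith [sq_nonneg b1, sq_nonneg b2]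
  have n1 : |1 - 2*b1| ≤ t/4 := by
    rw [show (1 - 2*b1) = 2*(-b1)+1 by ring]; exact absbnd t (-b1) ht (by nlinarith)
  have n2 : |1 - 2*b2| ≤ t/4 := by
    rw [show (1 - 2*b2) = 2*(-b2)+1 by ring]; exact absbnd t (-b2) ht (by nlinarith)
  have n3 : |1 - 2*b3| ≤ t/4 := by
    rw [show (1 - 2*b3) = 2*(-b3)+1 by ring]; exact absbnd t (-b3) ht (by nlinarith)
  have H1 := taylor4 t (2*b1+1) ht (absbnd t b1 ht sq1)
  have H2 := taylor4 t (1-2*b1) ht n1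
  have H3 := taylor4 t (2*b2+1) ht (absbnd t b2 ht sq2)
  have H4 := taylor4 t (1-2*b2) ht n2
  have H5 := taylor4 t (2*b3+1) ht (absbnd t b3 ht sq3)
  have H6 := taylor4 t (1-2*b3) ht n3
  have hquart : b1^4 + b2^4 + b3^4 ≤ (t-1)^2 := by
    nlinarith [sq_nonneg (b1*b2), sq_nonneg (b1*b3), sq_nonneg (b2*b3)]
  have hu : (0:ℝ) ≤ t ^ (-(1/4):ℝ) := Real.rpow_nonneg ht0.le _
  have ht4 : (0:ℝ) < t^4 := by positivity
  set u := t ^ (-(1/4):ℝ) with hudef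
  set S1 := (t^4 - (2*b1+1)*t^3/4 + 5/32*(2*b1+1)^2*t^2 - 15/128*(2*b1+1)^3*t + 1/2*(2*b1+1)^4) with hS1
  set S2 := (t^4 - (1-2*b1)*t^3/4 + 5/32*(1-2*b1)^2*t^2 - 15/128*(1-2*b1)^3*t + 1/2*(1-2*b1)^4) with hS2
  set S3 := (t^4 - (2*b2+1)*t^3/4 + 5/32*(2*b2+1)^2*t^2 - 15/128*(2*b2+1)^3*t + 1/2*(2*b2+1)^4) with hS3
  set S4 := (t^4 - (1-2*b2)*t^3/4 + 5/32*(1-2*b2)^2*t^2 - 15/128*(1-2*b2)^3*t + 1/2*(1-2*b2)^4) with hS4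
  set S5 := (t^4 - (2*b3+1)*t^3/4 + 5/32*(2*b3+1)^2*t^2 - 15/128*(2*b3+1)^3*t + 1/2*(2*b3+1)^4) with hS5
  set S6 := (t^4 - (1-2*b3)*t^3/4 + 5/32*(1-2*b3)^2*t^2 - 15/128*(1-2*b3)^3*t + 1/2*(1-2*b3)^4) with hS6
  have numle : S1 + S2 + S3 + S4 + S5 + S6 ≤ 6 * t^4 := by
    rw [hS1, hS2, hS3, hS4, hS5, hS6]
    exact numle t b1 b2 b3 ht hq hquart
  have step : u * (S1/t^4) + u * (S2/t^4) + u * (S3/t^4) + u * (S4/t^4) + u * (S5/t^4) + u * (S6/t^4)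
      ≤ 6 * u := by
    have e : u * (S1/t^4) + u * (S2/t^4) + u * (S3/t^4) + u * (S4/t^4) + u * (S5/t^4) + u * (S6/t^4)
        = u * ((S1+S2+S3+S4+S5+S6)/t^4) := by ring
    rw [e]
    calc u * ((S1+S2+S3+S4+S5+S6)/t^4) ≤ u * 6 := by
          apply mul_le_mul_of_nonneg_left _ hu
          rw [div_le_iff₀ ht4]; linarith
      _ = 6 * u := by ring
  linarith

lemma sum_nbrs (g : Z3 → ℝ) (x : Z3) : ∑ y ∈ nbrs x, g y =
    g (x.1+1, x.2) + g (x.1-1, x.2) + g (x.1, x.2.1+1, x.2.2) + g (x.1, x.2.1-1, x.2.2)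
    + g (x.1, x.2.1, x.2.2+1) + g (x.1, x.2.1, x.2.2-1) := by
  unfold nbrs
  rw [Finset.sum_insert (by simp [Prod.ext_iff]; try omega),
      Finset.sum_insert (by simp [Prod.ext_iff]; try omega),
      Finset.sum_insert (by simp [Prod.ext_iff]; try omega),
      Finset.sum_insert (by simp [Prod.ext_iff]; try omega),
      Finset.sum_insert (by simp [Prod.ext_iff]; try omega),
      Finset.sum_singleton]
  ring

def qd (c x : Z3) : ℤ := (x.1 - c.1)^2 + (x.2.1 - c.2.1)^2 + (x.2.2 - c.2.2)^2

noncomputable def fbar (c : Z3) (A : ℝ) (x : Z3) : ℝ :=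
  min 1 (A * ((qd c x : ℝ) + 1) ^ (-(1/4):ℝ))

lemma qd_cast_nonneg (c x : Z3) : (0:ℝ) ≤ (qd c x : ℝ) := by
  have : (0:ℤ) ≤ qd c x := by unfold qd; positivity
  exact_mod_cast this

lemma fbar_nonneg (c : Z3) (A : ℝ) (hA : 0 ≤ A) (x : Z3) : 0 ≤ fbar c A x :=
  le_min zero_le_one (mul_nonneg hA (Real.rpow_nonneg (by nlinarith [qd_cast_nonneg c x]) _))

lemma fbar_le_one (c : Z3) (A : ℝ) (x : Z3) : fbar c A x ≤ 1 := min_le_left _ _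

lemma fbar_step (c : Z3) (A : ℝ) (hA0 : 0 < A) (hA : 100 ≤ A^4) (x : Z3) :
    ∑ y ∈ nbrs x, (1/6:ℝ) * fbar c A y ≤ fbar c A x := by
  set t : ℝ := (qd c x : ℝ) + 1 with hts
  have ht1 : (1:ℝ) ≤ t := by rw [hts]; linarith [qd_cast_nonneg c x]
  have ht0 : (0:ℝ) < t := by linarith
  rcases le_or_gt 1 (A * t ^ (-(1/4):ℝ)) with hc | hc
  · -- fbar x = 1
    have hx : fbar c A x = 1 := min_eq_left hc
    rw [hx, sum_nbrs (fun y => (1/6:ℝ) * fbar c A y) x]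
    have l : ∀ y : Z3, (1/6:ℝ) * fbar c A y ≤ 1/6 := fun y => by
      have := fbar_le_one c A y; linarith
    linarith [l (x.1+1, x.2), l (x.1-1, x.2), l (x.1, x.2.1+1, x.2.2), l (x.1, x.2.1-1, x.2.2),
      l (x.1, x.2.1, x.2.2+1), l (x.1, x.2.1, x.2.2-1)]
  · -- fbar x = A * t^{-1/4}, and t > A^4 ≥ 100
    have hx : fbar c A x = A * t ^ (-(1/4):ℝ) := min_eq_right hc.le
    have ht100 : 100 ≤ t := by
      by_contra hcon
      push_neg at hcon
      have h4 : t ≤ A^4 := by linarith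
      have e4 : (t ^ ((1/4):ℝ))^(4:ℕ) = t := by
        rw [← Real.rpow_natCast (t ^ ((1/4):ℝ)) 4, ← Real.rpow_mul ht0.le]
        norm_num
      have hroot : t ^ ((1/4):ℝ) ≤ A := by
        apply le_of_pow_le_pow_left₀ (by norm_num : (4:ℕ) ≠ 0) hA0.le
        rw [e4]; exact h4
      have hpos : (0:ℝ) < t ^ ((1/4):ℝ) := Real.rpow_pos_of_pos ht0 _
      have hinv : t ^ (-(1/4):ℝ) = (t ^ ((1/4):ℝ))⁻¹ := by
        rw [← Real.rpow_neg ht0.le]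
      have : (1:ℝ) ≤ A * t ^ (-(1/4):ℝ) := by
        rw [hinv]
        have h2 := mul_le_mul_of_nonneg_right hroot (inv_nonneg.2 hpos.le)
        rwa [mul_inv_cancel₀ hpos.ne'] at h2
      linarith
    set b1 : ℝ := ((x.1 - c.1 : ℤ) : ℝ) with hb1
    set b2 : ℝ := ((x.2.1 - c.2.1 : ℤ) : ℝ) with hb2
    set b3 : ℝ := ((x.2.2 - c.2.2 : ℤ) : ℝ) with hb3
    have hq : b1^2 + b2^2 + b3^2 = t - 1 := by
      rw [hb1, hb2, hb3, hts]; unfold qd; push_cast; ring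
    have hcore := core t b1 b2 b3 ht100 hq
    -- neighbor identities
    have e1 : ((qd c (x.1+1, x.2) : ℝ) + 1) = t + (2*b1+1) := by
      rw [hts, hb1]; unfold qd; push_cast; ring
    have e2 : ((qd c (x.1-1, x.2) : ℝ) + 1) = t + (1-2*b1) := by
      rw [hts, hb1]; unfold qd; push_cast; ring
    have e3 : ((qd c (x.1, x.2.1+1, x.2.2) : ℝ) + 1) = t + (2*b2+1) := by
      rw [hts, hb2]; unfold qd; push_cast; ring
    have e4 : ((qd c (x.1, x.2.1-1, x.2.2) : ℝ) + 1) = t + (1-2*b2) := by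
      rw [hts, hb2]; unfold qd; push_cast; ring
    have e5 : ((qd c (x.1, x.2.1, x.2.2+1) : ℝ) + 1) = t + (2*b3+1) := by
      rw [hts, hb3]; unfold qd; push_cast; ring
    have e6 : ((qd c (x.1, x.2.1, x.2.2-1) : ℝ) + 1) = t + (1-2*b3) := by
      rw [hts, hb3]; unfold qd; push_cast; ring
    have hf : ∀ y : Z3, fbar c A y ≤ A * ((qd c y : ℝ) + 1) ^ (-(1/4):ℝ) :=
      fun y => min_le_right _ _
    rw [hx, sum_nbrs (fun y => (1/6:ℝ) * fbar c A y) x]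
    have k1 := hf (x.1+1, x.2); rw [e1] at k1
    have k2 := hf (x.1-1, x.2); rw [e2] at k2
    have k3 := hf (x.1, x.2.1+1, x.2.2); rw [e3] at k3
    have k4 := hf (x.1, x.2.1-1, x.2.2); rw [e4] at k4
    have k5 := hf (x.1, x.2.1, x.2.2+1); rw [e5] at k5
    have k6 := hf (x.1, x.2.1, x.2.2-1); rw [e6] at k6
    linarith [mul_le_mul_of_nonneg_left hcore hA0.le, k1, k2, k3, k4, k5, k6]

lemma hitBy_le_fbar (S : Finset Z3) (c : Z3) (A : ℝ) (hA0 : 0 < A) (hA : 100 ≤ A^4)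
    (hS : ∀ y ∈ S, 1 ≤ A * ((qd c y : ℝ) + 1) ^ (-(1/4):ℝ)) :
    ∀ n x, hitBy S n x ≤ fbar c A x := by
  intro n
  induction n with
  | zero =>
    intro x
    rw [hitBy]
    split
    · next hmem => rw [fbar, min_eq_left (hS x hmem)]
    · exact fbar_nonneg c A hA0.le x
  | succ n ih =>
    intro x
    rw [hitBy]
    split
    · next hmem => rw [fbar, min_eq_left (hS x hmem)]
    · calc ∑ y ∈ nbrs x, (1/6:ℝ) * hitBy S n y
          ≤ ∑ y ∈ nbrs x, (1/6:ℝ) * fbar c A y := by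
            apply Finset.sum_le_sum
            intro y _
            have := ih y
            linarith
        _ ≤ fbar c A x := fbar_step c A hA0 hA x

lemma hitProb_le_fbar (S : Finset Z3) (c : Z3) (A : ℝ) (hA0 : 0 < A) (hA : 100 ≤ A^4)
    (hS : ∀ y ∈ S, 1 ≤ A * ((qd c y : ℝ) + 1) ^ (-(1/4):ℝ)) (x : Z3) :
    hitProb S x ≤ fbar c A x :=
  ciSup_le (fun n => hitBy_le_fbar S c A hA0 hA hS n x)

theorem statement15 (α ε : ℝ) (hα : 0 < α) (hα' : α < 1 / 2) (hε : 0 < ε) :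
    ∀ δ : ℝ, 0 < δ →
      ∃ N₀ : ℕ, ∀ N : ℕ, N₀ ≤ N →
        ∀ x : Z3,
          (N : ℝ) + ((⌊(N : ℝ) ^ α⌋₊ : ℝ) ^ ((2 : ℝ) + ε)) ≤ (x.1 : ℝ) →
            hitProb (SigPlus N ⌊(N : ℝ) ^ α⌋₊) x ≤ δ := by
  intro δ hδ
  set C : ℝ := max 1 ((4/δ)^2) with hC
  have htend : Tendsto (fun N : ℕ => ((N:ℝ))^α) atTop atTop :=
    (tendsto_rpow_atTop hα).comp tendsto_natCast_atTop_atTop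
  obtain ⟨N₀, hN₀⟩ := (htend.eventually (eventually_ge_atTop (C+1))).exists_forall_of_atTop
  refine ⟨N₀, fun N hN x hx => ?_⟩
  set M : ℕ := ⌊(N : ℝ) ^ α⌋₊ with hM
  have hCM : C ≤ (M:ℝ) := by
    have h1 := hN₀ N hN
    have h2 : (N:ℝ)^α < M + 1 := Nat.lt_floor_add_one _
    linarith
  have hM1 : (1:ℝ) ≤ (M:ℝ) := le_trans (le_max_left _ _) hCM
  have hMδ : (4/δ)^2 ≤ (M:ℝ) := le_trans (le_max_right _ _) hCM
  have hM0 : (0:ℝ) < (M:ℝ) := by linarith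
  set B : ℝ := 2*(M:ℝ)^2 + 101 with hB
  have hB0 : (0:ℝ) < B := by positivity
  set A : ℝ := B ^ ((1/4):ℝ) with hA
  have hA0 : 0 < A := Real.rpow_pos_of_pos hB0 _
  have hA4 : A^4 = B := by
    rw [hA, ← Real.rpow_natCast (B ^ ((1/4):ℝ)) 4, ← Real.rpow_mul hB0.le]
    norm_num
  have hA100 : 100 ≤ A^4 := by rw [hA4, hB]; nlinarith [sq_nonneg (M:ℝ)]
  set c : Z3 := ((N:ℤ), (0:ℤ), (0:ℤ)) with hc
  -- hS
  have hS : ∀ y ∈ SigPlus N M, 1 ≤ A * ((qd c y : ℝ) + 1) ^ (-(1/4):ℝ) := by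
    intro y hy
    simp only [SigPlus, Finset.mem_product, Finset.mem_singleton, Finset.mem_Icc] at hy
    obtain ⟨hy1, ⟨hy2a, hy2b⟩, ⟨hy3a, hy3b⟩⟩ := hy
    have hq2 : y.2.1^2 ≤ (M:ℤ)^2 := sq_le_sq' hy2a hy2b
    have hq3 : y.2.2^2 ≤ (M:ℤ)^2 := sq_le_sq' hy3a hy3b
    have hqd : qd c y ≤ 2*(M:ℤ)^2 := by
      unfold qd
      rw [hc, hy1]
      simp only
      nlinarith [hq2, hq3]
    have hqdR : ((qd c y : ℝ) + 1) ≤ B := by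
      rw [hB]
      have : (qd c y : ℝ) ≤ 2*(M:ℝ)^2 := by exact_mod_cast hqd
      linarith
    have hqd0 : (0:ℝ) < (qd c y : ℝ) + 1 := by linarith [qd_cast_nonneg c y]
    have hmono : B ^ (-(1/4):ℝ) ≤ ((qd c y : ℝ) + 1) ^ (-(1/4):ℝ) :=
      Real.rpow_le_rpow_of_nonpos hqd0 hqdR (by norm_num)
    have hone : A * B ^ (-(1/4):ℝ) = 1 := by
      rw [hA, ← Real.rpow_add hB0]
      norm_num
    calc (1:ℝ) = A * B ^ (-(1/4):ℝ) := hone.symm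
      _ ≤ A * ((qd c y : ℝ) + 1) ^ (-(1/4):ℝ) :=
          mul_le_mul_of_nonneg_left hmono hA0.le
  have hmain := hitProb_le_fbar (SigPlus N M) c A hA0 hA100 hS x
  -- now bound fbar c A x
  set R : ℝ := (M:ℝ) ^ ((2:ℝ)+ε) with hR
  have hR1 : (1:ℝ) ≤ R := Real.one_le_rpow hM1 (by linarith)
  have hxN : R ≤ (x.1:ℝ) - (N:ℝ) := by linarith
  set u : ℝ := (qd c x : ℝ) + 1 with hu
  have hu0 : (0:ℝ) < u := by rw [hu]; linarith [qd_cast_nonneg c x]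
  have huR : R^2 ≤ u := by
    have h1 : ((x.1 - c.1 : ℤ):ℝ)^2 ≤ (qd c x : ℝ) := by
      unfold qd; push_cast; nlinarith [sq_nonneg ((x.2.1:ℝ) - (c.2.1:ℝ)), sq_nonneg ((x.2.2:ℝ) - (c.2.2:ℝ))]
    have h2 : R^2 ≤ ((x.1 - c.1 : ℤ):ℝ)^2 := by
      have : ((x.1 - c.1 : ℤ):ℝ) = (x.1:ℝ) - (N:ℝ) := by rw [hc]; push_cast; ring
      rw [this]
      nlinarith [hxN, hR1]
    rw [hu]; linarith
  have hfb : fbar c A x ≤ A * (R^2) ^ (-(1/4):ℝ) := by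
    refine le_trans (min_le_right _ _) ?_
    apply mul_le_mul_of_nonneg_left _ hA0.le
    exact Real.rpow_le_rpow_of_nonpos (by positivity) huR (by norm_num)
  -- (R^2)^{-1/4} = M^{-(2+ε)/2} ≤ M^{-1}
  have hRe : (R^2) ^ (-(1/4):ℝ) = (M:ℝ) ^ (((2:ℝ)+ε) * (-(1/2):ℝ)) := by
    rw [hR, ← Real.rpow_natCast ((M:ℝ) ^ ((2:ℝ)+ε)) 2, ← Real.rpow_mul hM0.le,
        ← Real.rpow_mul hM0.le]
    norm_num
    congr 1
    ring
  have hRle : (M:ℝ) ^ (((2:ℝ)+ε) * (-(1/2):ℝ)) ≤ (M:ℝ) ^ (-1:ℝ) := by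
    apply Real.rpow_le_rpow_of_exponent_le hM1
    nlinarith
  have hAle : A ≤ 4 * (M:ℝ) ^ ((1/2):ℝ) := by
    apply le_of_pow_le_pow_left₀ (by norm_num : (4:ℕ) ≠ 0) (by positivity)
    rw [hA4]
    have e : (4 * (M:ℝ) ^ ((1/2):ℝ))^(4:ℕ) = 256 * (M:ℝ)^2 := by
      rw [mul_pow, ← Real.rpow_natCast ((M:ℝ) ^ ((1/2):ℝ)) 4, ← Real.rpow_mul hM0.le]
      norm_num
    rw [e, hB]
    nlinarith [hM1]
  have hfinal : A * (R^2) ^ (-(1/4):ℝ) ≤ δ := by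
    rw [hRe]
    have hMe : (0:ℝ) ≤ (M:ℝ) ^ (((2:ℝ)+ε) * (-(1/2):ℝ)) := Real.rpow_nonneg hM0.le _
    have step1 : A * (M:ℝ) ^ (((2:ℝ)+ε) * (-(1/2):ℝ)) ≤ (4 * (M:ℝ) ^ ((1/2):ℝ)) * (M:ℝ) ^ (-1:ℝ) := by
      apply mul_le_mul hAle hRle hMe (by positivity)
    have step2 : (4 * (M:ℝ) ^ ((1/2):ℝ)) * (M:ℝ) ^ (-1:ℝ) = 4 * (M:ℝ) ^ (-(1/2):ℝ) := by
      rw [mul_assoc, ← Real.rpow_add hM0]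
      norm_num
    have hroot : 4/δ ≤ (M:ℝ) ^ ((1/2):ℝ) := by
      have h1 : ((4/δ)^2) ^ ((1/2):ℝ) ≤ (M:ℝ) ^ ((1/2):ℝ) :=
        Real.rpow_le_rpow (by positivity) hMδ (by norm_num)
      have h2 : ((4/δ)^2 : ℝ) ^ ((1/2):ℝ) = 4/δ := by
        rw [← Real.rpow_natCast (4/δ) 2, ← Real.rpow_mul (by positivity)]
        norm_num
      rwa [h2] at h1
    have step3 : 4 * (M:ℝ) ^ (-(1/2):ℝ) ≤ δ := by
      have hpos : (0:ℝ) < (M:ℝ) ^ ((1/2):ℝ) := Real.rpow_pos_of_pos hM0 _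
      have hinv : (M:ℝ) ^ (-(1/2):ℝ) = ((M:ℝ) ^ ((1/2):ℝ))⁻¹ := by
        rw [← Real.rpow_neg hM0.le]
      rw [hinv]
      rw [show (4 : ℝ) * ((M:ℝ) ^ ((1/2):ℝ))⁻¹ = 4 / (M:ℝ) ^ ((1/2):ℝ) by ring]
      rw [div_le_iff₀ hpos]
      have := mul_le_mul_of_nonneg_left hroot hδ.le
      rw [mul_div_cancel₀ _ (ne_of_gt hδ)] at this
      linarith [mul_le_mul_of_nonneg_left hroot hδ.le]
    linarith
  calc hitProb (SigPlus N M) x ≤ fbar c A x := hmain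
    _ ≤ A * (R^2) ^ (-(1/4):ℝ) := hfb
    _ ≤ δ := hfinal
end

section
/- For every λ ≠ 0 and every integer N ≥ 1 there exists exactly one bounded harmonic function u on Ω_N with boundary values (λ, −λ) at infinity. -/
open Real Filter

/-- `Λ_{N,M} = {x ∈ ℤ³ : |x₁| < N, |x₂| ≤ M, |x₃| ≤ M}`. -/
noncomputable def LamNM (N M : ℕ) : Finset Z3 :=
  Finset.Ioo (-(N : ℤ)) (N : ℤ) ×ˢ
    (Finset.Icc (-(M : ℤ)) (M : ℤ) ×ˢ Finset.Icc (-(M : ℤ)) (M : ℤ))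

/-- `Ω_N = Λ_{N,M} ∪ {x₁ ≥ N} ∪ {x₁ ≤ −N}`. -/
def inOm (N M : ℕ) (x : Z3) : Prop :=
  x ∈ LamNM N M ∨ (N : ℤ) ≤ x.1 ∨ x.1 ≤ -(N : ℤ)

noncomputable instance (N M : ℕ) : DecidablePred (inOm N M) := fun x => by unfold inOm; infer_instance

/-- The sites of `Ω_N`. -/
abbrev OmT (N M : ℕ) : Type := {x : Z3 // inOm N M x}

/-- `K_x = #{y ∈ Ω_N : y ∼ x}`. -/
noncomputable def KO (N M : ℕ) (x : Z3) : ℕ := ((nbrs x).filter (inOm N M)).card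

/-- `u` is harmonic on `Ω_N`: `K_x·u(x) = Σ_{y∈Ω_N : y∼x} u(y)` for every `x ∈ Ω_N`. -/
def Harmonic (N M : ℕ) (u : OmT N M → ℝ) : Prop :=
  ∀ x : OmT N M,
    (KO N M (x : Z3) : ℝ) * u x =
      ∑ y ∈ ((nbrs (x : Z3)).filter (inOm N M)).attach,
        u ⟨(y : Z3), (Finset.mem_filter.mp y.2).2⟩

/-- `u` is bounded on `Ω_N`. -/
def BddFun (N M : ℕ) (u : OmT N M → ℝ) : Prop := ∃ C : ℝ, ∀ x : OmT N M, |u x| ≤ C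

/-- `u` has boundary values `(λ, −λ)` at infinity: for every `δ > 0` there is `K` with
`|u(x) − λ| ≤ δ` whenever `x₁ ≤ −K` and `|u(x) + λ| ≤ δ` whenever `x₁ ≥ K`. -/
def BdryVals (lam : ℝ) (N M : ℕ) (u : OmT N M → ℝ) : Prop :=
  ∀ δ : ℝ, 0 < δ → ∃ K : ℤ,
    (∀ x : OmT N M, (x : Z3).1 ≤ -K → |u x - lam| ≤ δ) ∧
      ∀ x : OmT N M, K ≤ (x : Z3).1 → |u x + lam| ≤ δ


namespace S17

/-! ### One-dimensional analytic estimates -/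

lemma polyA (s : ℝ) (h1 : -(1/4) ≤ s) (h2 : s ≤ 1/4) :
    (1 - s/2 + (3/8)*s^2 - (5/16)*s^3 + s^4) ≤ (1 - s/4 + (5/32)*s^2 - (15/128)*s^3 + 2*s^4)^2 := by
  nlinarith [sq_nonneg s, sq_nonneg (s^2), sq_nonneg (s^3), sq_nonneg (s^2 + s),
    sq_nonneg (s^2 - s),
    mul_nonneg (by linarith : (0:ℝ) ≤ 1/4 + s) (by linarith : (0:ℝ) ≤ 1/4 - s)]

lemma polyB (s : ℝ) (h1 : -(1/4) ≤ s) (h2 : s ≤ 1/4) :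
    1 ≤ (1+s) * (1 - s/2 + (3/8)*s^2 - (5/16)*s^3 + s^4)^2 := by
  nlinarith [sq_nonneg s, sq_nonneg (s^2), sq_nonneg (s^3), sq_nonneg (s^2 + s),
    sq_nonneg (s^2 - s),
    mul_nonneg (by linarith : (0:ℝ) ≤ 1/4 + s) (by linarith : (0:ℝ) ≤ 1/4 - s)]

lemma L1 (s : ℝ) (h1 : -(1/4) ≤ s) (h2 : s ≤ 1/4) :
    (1+s) ^ (-(1/4) : ℝ) ≤ 1 - s/4 + (5/32)*s^2 - (15/128)*s^3 + 2*s^4 := by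
  have hs : (0:ℝ) < 1 + s := by linarith
  have hPpos : (0:ℝ) < 1 - s/4 + (5/32)*s^2 - (15/128)*s^3 + 2*s^4 := by
    nlinarith [sq_nonneg s, sq_nonneg (s^2), sq_nonneg (s-1/4)]
  have hQpos : (0:ℝ) < 1 - s/2 + (3/8)*s^2 - (5/16)*s^3 + s^4 := by
    nlinarith [sq_nonneg s, sq_nonneg (s^2), sq_nonneg (s-1/4)]
  have hQ2 : (1 - s/2 + (3/8)*s^2 - (5/16)*s^3 + s^4)^2
      ≤ ((1 - s/4 + (5/32)*s^2 - (15/128)*s^3 + 2*s^4)^2)^2 :=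
    pow_le_pow_left₀ hQpos.le (polyA s h1 h2) 2
  have hkey : 1 ≤ (1+s) * (1 - s/4 + (5/32)*s^2 - (15/128)*s^3 + 2*s^4)^4 := by
    calc (1:ℝ) ≤ (1+s) * (1 - s/2 + (3/8)*s^2 - (5/16)*s^3 + s^4)^2 := polyB s h1 h2
    _ ≤ (1+s) * ((1 - s/4 + (5/32)*s^2 - (15/128)*s^3 + 2*s^4)^2)^2 :=
        mul_le_mul_of_nonneg_left hQ2 hs.le
    _ = (1+s) * (1 - s/4 + (5/32)*s^2 - (15/128)*s^3 + 2*s^4)^4 := by ring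
  have ha4 : ((1+s) ^ (-(1/4):ℝ))^(4:ℕ) = (1+s)⁻¹ := by
    rw [← Real.rpow_natCast ((1+s) ^ (-(1/4):ℝ)) 4, ← Real.rpow_mul hs.le]
    norm_num [Real.rpow_neg_one]
  refine le_of_pow_le_pow_left₀ (n := 4) (by norm_num) hPpos.le ?_
  rw [ha4, inv_eq_one_div, div_le_iff₀ hs]
  nlinarith [hkey]

lemma polycore (t u v w : ℝ) (ht : 0 < t) (ht' : t ≤ 1/300) (h : u^2+v^2+w^2 = t) :
    (1 - (t+2*u)/4 + (5/32)*(t+2*u)^2 - (15/128)*(t+2*u)^3 + 2*(t+2*u)^4)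
  + (1 - (t-2*u)/4 + (5/32)*(t-2*u)^2 - (15/128)*(t-2*u)^3 + 2*(t-2*u)^4)
  + (1 - (t+2*v)/4 + (5/32)*(t+2*v)^2 - (15/128)*(t+2*v)^3 + 2*(t+2*v)^4)
  + (1 - (t-2*v)/4 + (5/32)*(t-2*v)^2 - (15/128)*(t-2*v)^3 + 2*(t-2*v)^4)
  + (1 - (t+2*w)/4 + (5/32)*(t+2*w)^2 - (15/128)*(t+2*w)^3 + 2*(t+2*w)^4)
  + (1 - (t-2*w)/4 + (5/32)*(t-2*w)^2 - (15/128)*(t-2*w)^3 + 2*(t-2*w)^4) ≤ 6 := by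
  have hA4 : u^4+v^4+w^4 ≤ t^2 := by
    nlinarith [sq_nonneg (u*v), sq_nonneg (u*w), sq_nonneg (v*w), sq_nonneg (u^2+v^2+w^2)]
  have hexp : (1 - (t+2*u)/4 + (5/32)*(t+2*u)^2 - (15/128)*(t+2*u)^3 + 2*(t+2*u)^4)
  + (1 - (t-2*u)/4 + (5/32)*(t-2*u)^2 - (15/128)*(t-2*u)^3 + 2*(t-2*u)^4)
  + (1 - (t+2*v)/4 + (5/32)*(t+2*v)^2 - (15/128)*(t+2*v)^3 + 2*(t+2*v)^4)
  + (1 - (t-2*v)/4 + (5/32)*(t-2*v)^2 - (15/128)*(t-2*v)^3 + 2*(t-2*v)^4)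
  + (1 - (t+2*w)/4 + (5/32)*(t+2*w)^2 - (15/128)*(t+2*w)^3 + 2*(t+2*w)^4)
  + (1 - (t-2*w)/4 + (5/32)*(t-2*w)^2 - (15/128)*(t-2*w)^3 + 2*(t-2*w)^4)
    = 6 - t/4 - (15/8)*t^2 + (6099/64)*t^3 + 12*t^4 + 64*(u^4+v^4+w^4)
      + (5/4)*(u^2+v^2+w^2 - t) - (45/16)*t*(u^2+v^2+w^2-t) + 96*t^2*(u^2+v^2+w^2-t) := by
    ring
  rw [hexp, h]
  nlinarith [hA4, mul_pos ht ht, pow_pos ht 3, pow_pos ht 4,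
    mul_le_of_le_one_left (le_of_lt ht) (by linarith : t*300 ≤ 1)]

lemma term_le (Q e : ℝ) (hQ : 0 < Q) (h1 : -(Q/4) ≤ e) (h2 : e ≤ Q/4) :
    (Q+e)^(-(1/4):ℝ) ≤ Q^(-(1/4):ℝ) *
      (1 - (e/Q)/4 + (5/32)*(e/Q)^2 - (15/128)*(e/Q)^3 + 2*(e/Q)^4) := by
  have hb1 : -(1/4) ≤ e/Q := by rw [neg_le, ← neg_div, div_le_iff₀ hQ]; linarith
  have hb2 : e/Q ≤ 1/4 := by rw [div_le_iff₀ hQ]; linarith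
  have hsplit : Q + e = Q * (1 + e/Q) := by field_simp
  rw [hsplit, Real.mul_rpow hQ.le (by linarith)]
  exact mul_le_mul_of_nonneg_left (L1 _ hb1 hb2) (Real.rpow_nonneg hQ.le _)

lemma sum6 (a b c Q : ℝ) (hQ : Q = a^2+b^2+c^2) (h300 : 300 ≤ Q) :
    (Q+(2*a+1))^(-(1/4):ℝ) + (Q+(-(2*a)+1))^(-(1/4):ℝ)
  + (Q+(2*b+1))^(-(1/4):ℝ) + (Q+(-(2*b)+1))^(-(1/4):ℝ)
  + (Q+(2*c+1))^(-(1/4):ℝ) + (Q+(-(2*c)+1))^(-(1/4):ℝ) ≤ 6 * Q^(-(1/4):ℝ) := by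
  have hQpos : (0:ℝ) < Q := by linarith
  have ha2 : a^2 ≤ Q := by nlinarith [sq_nonneg b, sq_nonneg c]
  have hb2 : b^2 ≤ Q := by nlinarith [sq_nonneg a, sq_nonneg c]
  have hc2 : c^2 ≤ Q := by nlinarith [sq_nonneg a, sq_nonneg b]
  have bnd : ∀ x : ℝ, x^2 ≤ Q →
      (-(Q/4) ≤ 2*x+1 ∧ 2*x+1 ≤ Q/4 ∧ -(Q/4) ≤ -(2*x)+1 ∧ -(2*x)+1 ≤ Q/4) := by
    intro x hx
    refine ⟨by nlinarith [sq_nonneg (x+8)], by nlinarith [sq_nonneg (x-8)],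
      by nlinarith [sq_nonneg (x-8)], by nlinarith [sq_nonneg (x+8)]⟩
  obtain ⟨a1, a2, a3, a4⟩ := bnd a ha2
  obtain ⟨b1, b2, b3, b4⟩ := bnd b hb2
  obtain ⟨c1, c2, c3, c4⟩ := bnd c hc2
  have T1 := term_le Q (2*a+1) hQpos a1 a2
  have T2 := term_le Q (-(2*a)+1) hQpos a3 a4
  have T3 := term_le Q (2*b+1) hQpos b1 b2
  have T4 := term_le Q (-(2*b)+1) hQpos b3 b4
  have T5 := term_le Q (2*c+1) hQpos c1 c2
  have T6 := term_le Q (-(2*c)+1) hQpos c3 c4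
  have core := polycore (1/Q) (a/Q) (b/Q) (c/Q)
    (by positivity) (by rw [div_le_div_iff₀ hQpos (by norm_num : (0:ℝ) < 300)]; linarith)
    (by field_simp; rw [← hQ])
  have e1 : (2*a+1)/Q = 1/Q + 2*(a/Q) := by ring
  have e2 : (-(2*a)+1)/Q = 1/Q - 2*(a/Q) := by ring
  have e3 : (2*b+1)/Q = 1/Q + 2*(b/Q) := by ring
  have e4 : (-(2*b)+1)/Q = 1/Q - 2*(b/Q) := by ring
  have e5 : (2*c+1)/Q = 1/Q + 2*(c/Q) := by ring
  have e6 : (-(2*c)+1)/Q = 1/Q - 2*(c/Q) := by ring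
  rw [e1] at T1; rw [e2] at T2; rw [e3] at T3; rw [e4] at T4; rw [e5] at T5; rw [e6] at T6
  have hrn : (0:ℝ) ≤ Q^(-(1/4):ℝ) := Real.rpow_nonneg hQpos.le _
  calc (Q+(2*a+1))^(-(1/4):ℝ) + (Q+(-(2*a)+1))^(-(1/4):ℝ)
      + (Q+(2*b+1))^(-(1/4):ℝ) + (Q+(-(2*b)+1))^(-(1/4):ℝ)
      + (Q+(2*c+1))^(-(1/4):ℝ) + (Q+(-(2*c)+1))^(-(1/4):ℝ)
      ≤ Q^(-(1/4):ℝ) * ((1 - (1/Q+2*(a/Q))/4 + (5/32)*(1/Q+2*(a/Q))^2 - (15/128)*(1/Q+2*(a/Q))^3 + 2*(1/Q+2*(a/Q))^4)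
        + (1 - (1/Q-2*(a/Q))/4 + (5/32)*(1/Q-2*(a/Q))^2 - (15/128)*(1/Q-2*(a/Q))^3 + 2*(1/Q-2*(a/Q))^4)
        + (1 - (1/Q+2*(b/Q))/4 + (5/32)*(1/Q+2*(b/Q))^2 - (15/128)*(1/Q+2*(b/Q))^3 + 2*(1/Q+2*(b/Q))^4)
        + (1 - (1/Q-2*(b/Q))/4 + (5/32)*(1/Q-2*(b/Q))^2 - (15/128)*(1/Q-2*(b/Q))^3 + 2*(1/Q-2*(b/Q))^4)
        + (1 - (1/Q+2*(c/Q))/4 + (5/32)*(1/Q+2*(c/Q))^2 - (15/128)*(1/Q+2*(c/Q))^3 + 2*(1/Q+2*(c/Q))^4)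
        + (1 - (1/Q-2*(c/Q))/4 + (5/32)*(1/Q-2*(c/Q))^2 - (15/128)*(1/Q-2*(c/Q))^3 + 2*(1/Q-2*(c/Q))^4)) := by
        rw [mul_add, mul_add, mul_add, mul_add, mul_add]; gcongr
  _ ≤ Q^(-(1/4):ℝ) * 6 := by exact mul_le_mul_of_nonneg_left core hrn
  _ = 6 * Q^(-(1/4):ℝ) := by ring

/-! ### neighbors bookkeeping -/

def n1 (x : Z3) : Z3 := (x.1 + 1, x.2)
def n2 (x : Z3) : Z3 := (x.1 - 1, x.2)
def n3 (x : Z3) : Z3 := (x.1, x.2.1 + 1, x.2.2)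
def n4 (x : Z3) : Z3 := (x.1, x.2.1 - 1, x.2.2)
def n5 (x : Z3) : Z3 := (x.1, x.2.1, x.2.2 + 1)
def n6 (x : Z3) : Z3 := (x.1, x.2.1, x.2.2 - 1)

lemma nbrs_eq (x : Z3) : nbrs x = {n1 x, n2 x, n3 x, n4 x, n5 x, n6 x} := rfl

lemma sum_nbrs {β : Type*} [AddCommMonoid β] (g : Z3 → β) (x : Z3) :
    ∑ y ∈ nbrs x, g y = g (n1 x) + g (n2 x) + g (n3 x) + g (n4 x) + g (n5 x) + g (n6 x) := by
  rw [nbrs_eq]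
  rw [show ({n1 x, n2 x, n3 x, n4 x, n5 x, n6 x} : Finset Z3)
      = insert (n1 x) {n2 x, n3 x, n4 x, n5 x, n6 x} from rfl]
  rw [Finset.sum_insert (by simp [n1, n2, n3, n4, n5, n6, Prod.ext_iff] <;> omega)]
  rw [show ({n2 x, n3 x, n4 x, n5 x, n6 x} : Finset Z3)
      = insert (n2 x) {n3 x, n4 x, n5 x, n6 x} from rfl]
  rw [Finset.sum_insert (by simp [n2, n3, n4, n5, n6, Prod.ext_iff] <;> omega)]
  rw [show ({n3 x, n4 x, n5 x, n6 x} : Finset Z3) = insert (n3 x) {n4 x, n5 x, n6 x} from rfl]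
  rw [Finset.sum_insert (by simp [n3, n4, n5, n6, Prod.ext_iff] <;> omega)]
  rw [show ({n4 x, n5 x, n6 x} : Finset Z3) = insert (n4 x) {n5 x, n6 x} from rfl]
  rw [Finset.sum_insert (by simp [n4, n5, n6, Prod.ext_iff] <;> omega)]
  rw [show ({n5 x, n6 x} : Finset Z3) = insert (n5 x) {n6 x} from rfl]
  rw [Finset.sum_insert (by simp [n5, n6, Prod.ext_iff] <;> omega)]
  rw [Finset.sum_singleton]
  abel

lemma inOm_iff (N M : ℕ) (x : Z3) : inOm N M x ↔
    ((-(N:ℤ) < x.1 ∧ x.1 < N ∧ -(M:ℤ) ≤ x.2.1 ∧ x.2.1 ≤ M ∧ -(M:ℤ) ≤ x.2.2 ∧ x.2.2 ≤ M)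
      ∨ (N:ℤ) ≤ x.1 ∨ x.1 ≤ -(N:ℤ)) := by
  simp [inOm, LamNM, Finset.mem_Ioo, Finset.mem_Icc, and_assoc]

lemma sum_flt (N M : ℕ) (g : Z3 → ℝ) (x : Z3) :
    ∑ y ∈ (nbrs x).filter (inOm N M), g y =
      (if inOm N M (n1 x) then g (n1 x) else 0) + (if inOm N M (n2 x) then g (n2 x) else 0)
    + (if inOm N M (n3 x) then g (n3 x) else 0) + (if inOm N M (n4 x) then g (n4 x) else 0)
    + (if inOm N M (n5 x) then g (n5 x) else 0) + (if inOm N M (n6 x) then g (n6 x) else 0) := by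
  rw [Finset.sum_filter, sum_nbrs]

lemma KO_eq (N M : ℕ) (x : Z3) : KO N M x =
      (if inOm N M (n1 x) then 1 else 0) + (if inOm N M (n2 x) then 1 else 0)
    + (if inOm N M (n3 x) then 1 else 0) + (if inOm N M (n4 x) then 1 else 0)
    + (if inOm N M (n5 x) then 1 else 0) + (if inOm N M (n6 x) then 1 else 0) := by
  rw [KO, Finset.card_filter, sum_nbrs]

lemma KO_le6 (N M : ℕ) (x : Z3) : KO N M x ≤ 6 := by
  rw [KO_eq] ; split_ifs <;> norm_num

lemma inOm_n1 (N M : ℕ) (x : Z3) (hx : inOm N M x) (h : -(N:ℤ) < x.1) : inOm N M (n1 x) := by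
  rw [inOm_iff] at hx ⊢ ; simp only [n1] ; omega

lemma inOm_n2' (N M : ℕ) (x : Z3) (hx : inOm N M x) (h : x.1 ≤ -(N:ℤ)) : inOm N M (n2 x) := by
  rw [inOm_iff] at hx ⊢ ; simp only [n2] ; omega

lemma mem_flt_n1 (N M : ℕ) (x : Z3) (hx : inOm N M x) (h : -(N:ℤ) < x.1) :
    n1 x ∈ (nbrs x).filter (inOm N M) := by
  rw [Finset.mem_filter]
  exact ⟨by simp [nbrs_eq, Finset.mem_insert], inOm_n1 N M x hx h⟩

lemma mem_flt_n2 (N M : ℕ) (x : Z3) (hx : inOm N M x) (h : x.1 ≤ -(N:ℤ)) :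
    n2 x ∈ (nbrs x).filter (inOm N M) := by
  rw [Finset.mem_filter]
  refine ⟨by simp [nbrs_eq, Finset.mem_insert], inOm_n2' N M x hx h⟩

lemma KO_pos (N M : ℕ) (x : Z3) (hx : inOm N M x) : 0 < KO N M x := by
  rcases le_or_gt x.1 (-(N:ℤ)) with h | h
  · exact Finset.card_pos.mpr ⟨n2 x, mem_flt_n2 N M x hx h⟩
  · exact Finset.card_pos.mpr ⟨n1 x, mem_flt_n1 N M x hx h⟩

/-! ### the radial barrier function -/

def qz (x : Z3) : ℤ := x.1^2 + x.2.1^2 + x.2.2^2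

noncomputable def fb (x : Z3) : ℝ := ((qz x : ℝ)) ^ (-(1/4) : ℝ)

lemma qz_nonneg (x : Z3) : (0:ℤ) ≤ qz x := by simp only [qz]; positivity

lemma qz_pos_of (x : Z3) (h : 1 ≤ x.1) : 1 ≤ qz x := by
  have h2 : (0:ℤ) ≤ x.2.1^2 := sq_nonneg _
  have h3 : (0:ℤ) ≤ x.2.2^2 := sq_nonneg _
  simp only [qz]; nlinarith [sq_nonneg x.1]

lemma fb_nonneg (x : Z3) : 0 ≤ fb x := Real.rpow_nonneg (by exact_mod_cast qz_nonneg x) _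

lemma fb_pos (x : Z3) (h : 1 ≤ qz x) : 0 < fb x :=
  Real.rpow_pos_of_pos (by exact_mod_cast h) _

lemma fb_mono (x y : Z3) (h0 : 1 ≤ qz x) (h : qz x ≤ qz y) : fb y ≤ fb x := by
  have hx0 : (0:ℝ) ≤ (qz x : ℝ) := by exact_mod_cast qz_nonneg x
  have hy0 : (0:ℝ) ≤ (qz y : ℝ) := by exact_mod_cast qz_nonneg y
  rw [fb, fb, Real.rpow_neg hx0, Real.rpow_neg hy0]
  have h1 : (0:ℝ) < (qz x : ℝ) := by exact_mod_cast h0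
  have h2 : (qz x : ℝ) ≤ (qz y : ℝ) := by exact_mod_cast h
  exact inv_anti₀ (Real.rpow_pos_of_pos h1 _) (Real.rpow_le_rpow h1.le h2 (by norm_num))

lemma qz_n1 (x : Z3) : ((qz (n1 x) : ℝ)) = (qz x : ℝ) + (2*(x.1:ℝ)+1) := by
  simp only [qz, n1]; push_cast; ring
lemma qz_n2 (x : Z3) : ((qz (n2 x) : ℝ)) = (qz x : ℝ) + (-(2*(x.1:ℝ))+1) := by
  simp only [qz, n2]; push_cast; ring
lemma qz_n3 (x : Z3) : ((qz (n3 x) : ℝ)) = (qz x : ℝ) + (2*(x.2.1:ℝ)+1) := by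
  simp only [qz, n3]; push_cast; ring
lemma qz_n4 (x : Z3) : ((qz (n4 x) : ℝ)) = (qz x : ℝ) + (-(2*(x.2.1:ℝ))+1) := by
  simp only [qz, n4]; push_cast; ring
lemma qz_n5 (x : Z3) : ((qz (n5 x) : ℝ)) = (qz x : ℝ) + (2*(x.2.2:ℝ)+1) := by
  simp only [qz, n5]; push_cast; ring
lemma qz_n6 (x : Z3) : ((qz (n6 x) : ℝ)) = (qz x : ℝ) + (-(2*(x.2.2:ℝ))+1) := by
  simp only [qz, n6]; push_cast; ring

lemma fb_mean (x : Z3) (h300 : (300:ℤ) ≤ qz x) :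
    fb (n1 x) + fb (n2 x) + fb (n3 x) + fb (n4 x) + fb (n5 x) + fb (n6 x) ≤ 6 * fb x := by
  have h300' : (300:ℝ) ≤ (qz x : ℝ) := by exact_mod_cast h300
  have hQ : ((qz x : ℝ)) = (x.1:ℝ)^2 + (x.2.1:ℝ)^2 + (x.2.2:ℝ)^2 := by
    simp only [qz]; push_cast; ring
  have := sum6 (x.1:ℝ) (x.2.1:ℝ) (x.2.2:ℝ) (qz x : ℝ) hQ h300'
  simpa only [fb, qz_n1, qz_n2, qz_n3, qz_n4, qz_n5, qz_n6] using this

lemma fb_superharm (N M : ℕ) (hN : 1 ≤ N) (hMN : M ≤ N) (x : Z3) (hx : inOm N M x)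
    (h1 : 1 ≤ x.1) (hq : 303*(N:ℤ)^2 < qz x) :
    ∑ y ∈ (nbrs x).filter (inOm N M), fb y ≤ (KO N M x : ℝ) * fb x := by
  have hNZ : (1:ℤ) ≤ (N:ℤ) := by exact_mod_cast hN
  have h300 : (300:ℤ) ≤ qz x := by nlinarith
  have hxN : (N:ℤ) ≤ x.1 := by
    by_contra hcon
    push_neg at hcon
    rw [inOm_iff] at hx
    have hM : (M:ℤ) ≤ (N:ℤ) := by exact_mod_cast hMN
    rcases hx with ⟨_, _, h3, h4, h5, h6⟩ | h | h
    · have : qz x ≤ 3*(N:ℤ)^2 := by simp only [qz]; nlinarith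
      nlinarith
    · omega
    · omega
  have hn1 : inOm N M (n1 x) := by rw [inOm_iff]; simp only [n1]; omega
  have hn3 : inOm N M (n3 x) := by rw [inOm_iff]; simp only [n3]; omega
  have hn4 : inOm N M (n4 x) := by rw [inOm_iff]; simp only [n4]; omega
  have hn5 : inOm N M (n5 x) := by rw [inOm_iff]; simp only [n5]; omega
  have hn6 : inOm N M (n6 x) := by rw [inOm_iff]; simp only [n6]; omega
  have hmean := fb_mean x h300
  have hq2le : qz (n2 x) ≤ qz x := by simp only [qz, n2]; nlinarith
  have hq2pos : 1 ≤ qz (n2 x) := by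
    simp only [qz, n2]
    rcases lt_or_ge 1 x.1 with h | h
    · nlinarith [sq_nonneg x.2.1, sq_nonneg x.2.2]
    · have hx1 : x.1 = 1 := le_antisymm h h1
      have : qz x = 1 + x.2.1^2 + x.2.2^2 := by simp only [qz, hx1]; ring
      have hNx : (N:ℤ) = 1 := by omega
      nlinarith [sq_nonneg (x.2.1), sq_nonneg (x.2.2)]
  have hfb2 : fb x ≤ fb (n2 x) := fb_mono (n2 x) x hq2pos hq2le
  rw [sum_flt, KO_eq]
  simp only [if_pos hn1, if_pos hn3, if_pos hn4, if_pos hn5, if_pos hn6]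
  by_cases h2 : inOm N M (n2 x)
  · simp only [if_pos h2]
    push_cast
    linarith
  · simp only [if_neg h2]
    push_cast
    linarith

/-! ### harmonicity notions on `Z3` -/

def HarmZ (N M : ℕ) (v : Z3 → ℝ) : Prop :=
  ∀ x, inOm N M x → (KO N M x : ℝ) * v x = ∑ y ∈ (nbrs x).filter (inOm N M), v y
def SubH (N M : ℕ) (v : Z3 → ℝ) : Prop :=
  ∀ x, inOm N M x → (KO N M x : ℝ) * v x ≤ ∑ y ∈ (nbrs x).filter (inOm N M), v y
def SupH (N M : ℕ) (v : Z3 → ℝ) : Prop :=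
  ∀ x, inOm N M x → ∑ y ∈ (nbrs x).filter (inOm N M), v y ≤ (KO N M x : ℝ) * v x

/-! ### the barrier `Phi` -/

noncomputable def cc (N : ℕ) : ℝ := ((303:ℝ) * (N:ℝ)^2) ^ ((1:ℝ)/4)

lemma cc_pos (N : ℕ) (hN : 1 ≤ N) : 0 < cc N := by
  have : (0:ℝ) < (N:ℝ) := by exact_mod_cast Nat.lt_of_lt_of_le Nat.zero_lt_one hN
  exact Real.rpow_pos_of_pos (by positivity) _

lemma cc_pow4 (N : ℕ) : (cc N)^(4:ℕ) = (303:ℝ) * (N:ℝ)^2 := by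
  rw [cc, ← Real.rpow_natCast (((303:ℝ) * (N:ℝ)^2) ^ ((1:ℝ)/4)) 4,
    ← Real.rpow_mul (by positivity)]
  norm_num

lemma fbranch_q (N : ℕ) (hN : 1 ≤ N) (x : Z3) (hq1 : 1 ≤ qz x) (h : cc N * fb x < 1) :
    303*(N:ℤ)^2 < qz x := by
  have hqR : (0:ℝ) < (qz x : ℝ) := by exact_mod_cast hq1
  have hfb : 0 < fb x := fb_pos x hq1
  have hcc := cc_pos N hN
  have hlt : cc N < ((qz x : ℝ)) ^ ((1:ℝ)/4) := by
    have : fb x = (((qz x : ℝ)) ^ ((1:ℝ)/4))⁻¹ := by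
      rw [fb, ← Real.rpow_neg hqR.le]
    rw [this] at h
    have hp : 0 < ((qz x : ℝ)) ^ ((1:ℝ)/4) := Real.rpow_pos_of_pos hqR _
    calc cc N = cc N * (((qz x : ℝ)) ^ ((1:ℝ)/4))⁻¹ * ((qz x : ℝ)) ^ ((1:ℝ)/4) := by
          field_simp
    _ < 1 * ((qz x : ℝ)) ^ ((1:ℝ)/4) := by exact mul_lt_mul_of_pos_right h hp
    _ = ((qz x : ℝ)) ^ ((1:ℝ)/4) := one_mul _
  have h4 : (cc N)^(4:ℕ) < (((qz x : ℝ)) ^ ((1:ℝ)/4))^(4:ℕ) :=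
    pow_lt_pow_left₀ hlt hcc.le (by norm_num)
  rw [cc_pow4] at h4
  rw [← Real.rpow_natCast (((qz x : ℝ)) ^ ((1:ℝ)/4)) 4, ← Real.rpow_mul hqR.le] at h4
  norm_num at h4
  exact_mod_cast h4

noncomputable def Phi (N : ℕ) (x : Z3) : ℝ := if x.1 ≤ 0 then 1 else min 1 (cc N * fb x)

lemma Phi_le_one (N : ℕ) (x : Z3) : Phi N x ≤ 1 := by
  rw [Phi]; split_ifs
  · exact le_rfl
  · exact min_le_left _ _

lemma Phi_nonneg (N : ℕ) (hN : 1 ≤ N) (x : Z3) : 0 ≤ Phi N x := by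
  rw [Phi]; split_ifs
  · norm_num
  · exact le_min (by norm_num) (mul_nonneg (cc_pos N hN).le (fb_nonneg x))

lemma tube_q_small (N M : ℕ) (hN : 1 ≤ N) (hMN : M ≤ N) (x : Z3) (hx : inOm N M x)
    (h1 : 1 ≤ x.1) (hq : 303*(N:ℤ)^2 < qz x) :
    (N:ℤ) ≤ x.1 ∧ ∀ y ∈ (nbrs x).filter (inOm N M), 1 ≤ y.1 := by
  have hNZ : (1:ℤ) ≤ (N:ℤ) := by exact_mod_cast hN
  have hM : (M:ℤ) ≤ (N:ℤ) := by exact_mod_cast hMN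
  have hxN : (N:ℤ) ≤ x.1 := by
    by_contra hcon
    push_neg at hcon
    rw [inOm_iff] at hx
    rcases hx with ⟨_, _, h3, h4, h5, h6⟩ | h | h
    · have : qz x ≤ 3*(N:ℤ)^2 := by simp only [qz]; nlinarith
      nlinarith
    · omega
    · omega
  refine ⟨hxN, ?_⟩
  intro y hy
  rw [Finset.mem_filter] at hy
  obtain ⟨hymem, hyOm⟩ := hy
  have : y = n1 x ∨ y = n2 x ∨ y = n3 x ∨ y = n4 x ∨ y = n5 x ∨ y = n6 x := by
    simpa [nbrs, n1, n2, n3, n4, n5, n6, Finset.mem_insert] using hymem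
  rcases this with rfl | rfl | rfl | rfl | rfl | rfl
  · simp only [n1]; omega
  · simp only [n2]
    by_contra hcon
    push_neg at hcon
    have hx1 : x.1 = 1 := by omega
    have hN1 : (N:ℤ) = 1 := by omega
    rw [inOm_iff] at hyOm
    simp only [n2] at hyOm
    rcases hyOm with ⟨_, _, h2a, h2b, h3a, h3b⟩ | h | h
    · have : qz x ≤ 1 + 2*(M:ℤ)^2 := by simp only [qz, hx1]; nlinarith
      nlinarith
    · omega
    · omega
  · simp only [n3]; omega
  · simp only [n4]; omega
  · simp only [n5]; omega
  · simp only [n6]; omega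

lemma Phi_superharm (N M : ℕ) (hN : 1 ≤ N) (hMN : M ≤ N) : SupH N M (Phi N) := by
  intro x hx
  by_cases hbr : (0 < x.1) ∧ cc N * fb x < 1
  · obtain ⟨hx1, hcf⟩ := hbr
    have hq1 : 1 ≤ qz x := qz_pos_of x hx1
    have hqbig := fbranch_q N hN x hq1 hcf
    obtain ⟨hxN, hy1⟩ := tube_q_small N M hN hMN x hx hx1 hqbig
    have hPhix : Phi N x = cc N * fb x := by
      rw [Phi, if_neg (by omega)]
      exact min_eq_right hcf.le
    have hPhiy : ∀ y ∈ (nbrs x).filter (inOm N M), Phi N y ≤ cc N * fb y := by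
      intro y hy
      have := hy1 y hy
      rw [Phi, if_neg (by omega)]
      exact min_le_right _ _
    calc ∑ y ∈ (nbrs x).filter (inOm N M), Phi N y
        ≤ ∑ y ∈ (nbrs x).filter (inOm N M), cc N * fb y := Finset.sum_le_sum hPhiy
    _ = cc N * ∑ y ∈ (nbrs x).filter (inOm N M), fb y := by rw [Finset.mul_sum]
    _ ≤ cc N * ((KO N M x : ℝ) * fb x) := by
        exact mul_le_mul_of_nonneg_left (fb_superharm N M hN hMN x hx hx1 hqbig)
          (cc_pos N hN).le
    _ = (KO N M x : ℝ) * Phi N x := by rw [hPhix]; ring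
  · have hPhix : Phi N x = 1 := by
      rw [Phi]
      split_ifs with h
      · rfl
      · push_neg at hbr
        have := hbr (by omega)
        exact min_eq_left (by linarith)
    rw [hPhix, mul_one]
    calc ∑ y ∈ (nbrs x).filter (inOm N M), Phi N y
        ≤ ∑ _y ∈ (nbrs x).filter (inOm N M), 1 :=
          Finset.sum_le_sum (fun y _ => Phi_le_one N y)
    _ = (KO N M x : ℝ) := by rw [Finset.sum_const, KO]; simp

/-! ### reflection symmetry -/

def sig (x : Z3) : Z3 := (-x.1, x.2)

lemma inOm_sig (N M : ℕ) (x : Z3) : inOm N M (sig x) ↔ inOm N M x := by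
  rw [inOm_iff, inOm_iff]; simp only [sig]; omega

lemma sig_n1 : ∀ x, n1 (sig x) = sig (n2 x) := by
  intro x; simp [n1, n2, sig, Prod.ext_iff]; ring
lemma sig_n2 : ∀ x, n2 (sig x) = sig (n1 x) := by
  intro x; simp [n1, n2, sig, Prod.ext_iff]; ring
lemma sig_n3 : ∀ x, n3 (sig x) = sig (n3 x) := fun _ => rfl
lemma sig_n4 : ∀ x, n4 (sig x) = sig (n4 x) := fun _ => rfl
lemma sig_n5 : ∀ x, n5 (sig x) = sig (n5 x) := fun _ => rfl
lemma sig_n6 : ∀ x, n6 (sig x) = sig (n6 x) := fun _ => rfl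

lemma sum_flt_sig (N M : ℕ) (g : Z3 → ℝ) (x : Z3) :
    ∑ y ∈ (nbrs (sig x)).filter (inOm N M), g y
      = ∑ y ∈ (nbrs x).filter (inOm N M), g (sig y) := by
  rw [sum_flt, sum_flt]
  rw [sig_n1, sig_n2, sig_n3, sig_n4, sig_n5, sig_n6]
  simp only [inOm_sig]
  ring

lemma KO_sig (N M : ℕ) (x : Z3) : KO N M (sig x) = KO N M x := by
  rw [KO_eq, KO_eq, sig_n1, sig_n2, sig_n3, sig_n4, sig_n5, sig_n6]
  simp only [inOm_sig]
  omega

/-! ### sub/super barriers -/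

noncomputable def Sb (N : ℕ) (lam : ℝ) (x : Z3) : ℝ := -lam + 2*lam * Phi N x
noncomputable def sb (N : ℕ) (lam : ℝ) (x : Z3) : ℝ := -(Sb N lam (sig x))

lemma sb_eq (N : ℕ) (lam : ℝ) (x : Z3) : sb N lam x = lam - 2*lam * Phi N (sig x) := by
  rw [sb, Sb]; ring

lemma KO_cast_pos (N M : ℕ) (x : Z3) (hx : inOm N M x) : (0:ℝ) < (KO N M x : ℝ) := by
  exact_mod_cast KO_pos N M x hx

lemma SupH_Sb (N M : ℕ) (lam : ℝ) (hN : 1 ≤ N) (hMN : M ≤ N) (hlam : 0 < lam) :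
    SupH N M (Sb N lam) := by
  intro x hx
  have hP := Phi_superharm N M hN hMN x hx
  have hsum : ∑ y ∈ (nbrs x).filter (inOm N M), Sb N lam y
      = (KO N M x : ℝ) * (-lam) + 2*lam * ∑ y ∈ (nbrs x).filter (inOm N M), Phi N y := by
    calc ∑ y ∈ (nbrs x).filter (inOm N M), Sb N lam y
        = ∑ y ∈ (nbrs x).filter (inOm N M), (-lam + 2*lam * Phi N y) := rfl
    _ = (∑ _y ∈ (nbrs x).filter (inOm N M), (-lam))
          + ∑ y ∈ (nbrs x).filter (inOm N M), 2*lam * Phi N y := Finset.sum_add_distrib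
    _ = (KO N M x : ℝ) * (-lam) + 2*lam * ∑ y ∈ (nbrs x).filter (inOm N M), Phi N y := by
        rw [Finset.sum_const, ← Finset.mul_sum, nsmul_eq_mul, KO]
  rw [hsum, Sb]
  nlinarith [KO_cast_pos N M x hx]

lemma SubH_sb (N M : ℕ) (lam : ℝ) (hN : 1 ≤ N) (hMN : M ≤ N) (hlam : 0 < lam) :
    SubH N M (sb N lam) := by
  intro x hx
  have hsx : inOm N M (sig x) := (inOm_sig N M x).mpr hx
  have h := SupH_Sb N M lam hN hMN hlam (sig x) hsx
  rw [KO_sig] at h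
  rw [sum_flt_sig N M (Sb N lam) x] at h
  rw [sb]
  have : ∑ y ∈ (nbrs x).filter (inOm N M), sb N lam y
      = -∑ y ∈ (nbrs x).filter (inOm N M), Sb N lam (sig y) := by
    rw [← Finset.sum_neg_distrib]; rfl
  rw [this]
  linarith

lemma sb_le_Sb (N : ℕ) (lam : ℝ) (hN : 1 ≤ N) (hlam : 0 < lam) (x : Z3) :
    sb N lam x ≤ Sb N lam x := by
  rw [sb_eq, Sb]
  rcases le_or_gt x.1 0 with h | h
  · have : Phi N x = 1 := if_pos h
    rw [this]
    nlinarith [Phi_nonneg N hN (sig x), Phi_le_one N (sig x)]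
  · have : Phi N (sig x) = 1 := if_pos (by simp only [sig]; omega)
    rw [this]
    nlinarith [Phi_nonneg N hN x, Phi_le_one N x]

lemma Sb_le (N : ℕ) (lam : ℝ) (hN : 1 ≤ N) (hlam : 0 < lam) (x : Z3) : Sb N lam x ≤ lam := by
  rw [Sb]; nlinarith [Phi_le_one N x]
lemma Sb_ge (N : ℕ) (lam : ℝ) (hN : 1 ≤ N) (hlam : 0 < lam) (x : Z3) : -lam ≤ Sb N lam x := by
  rw [Sb]; nlinarith [Phi_nonneg N hN x]
lemma sb_ge (N : ℕ) (lam : ℝ) (hN : 1 ≤ N) (hlam : 0 < lam) (x : Z3) : -lam ≤ sb N lam x := by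
  rw [sb_eq]; nlinarith [Phi_le_one N (sig x)]

/-! ### the Perron construction -/

def PA (N M : ℕ) (lam : ℝ) : Set (Z3 → ℝ) :=
  {w | SubH N M w ∧ ∀ x, inOm N M x → w x ≤ Sb N lam x}

noncomputable def uP (N M : ℕ) (lam : ℝ) (x : Z3) : ℝ := sSup ((fun w => w x) '' PA N M lam)

section Perron
variable (N M : ℕ) (lam : ℝ)
variable (hN : 1 ≤ N) (hMN : M ≤ N) (hlam : 0 < lam)
include hN hMN hlam

lemma sb_mem : sb N lam ∈ PA N M lam :=
  ⟨SubH_sb N M lam hN hMN hlam, fun x _ => sb_le_Sb N lam hN hlam x⟩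

lemma PA_nonempty {x : Z3} : ((fun w => w x) '' PA N M lam).Nonempty :=
  ⟨sb N lam x, Set.mem_image_of_mem _ (sb_mem N M lam hN hMN hlam)⟩

omit hN hMN hlam in
lemma PA_bdd (x : Z3) (hx : inOm N M x) : BddAbove ((fun w => w x) '' PA N M lam) := by
  refine ⟨Sb N lam x, ?_⟩
  rintro r ⟨w, hw, rfl⟩
  exact hw.2 x hx

omit hN hMN hlam in
lemma le_uP (w : Z3 → ℝ) (hw : w ∈ PA N M lam) (x : Z3) (hx : inOm N M x) :
    w x ≤ uP N M lam x :=
  le_csSup (PA_bdd N M lam x hx) (Set.mem_image_of_mem _ hw)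

lemma uP_le_Sb (x : Z3) (hx : inOm N M x) : uP N M lam x ≤ Sb N lam x := by
  apply csSup_le (PA_nonempty N M lam hN hMN hlam)
  rintro r ⟨w, hw, rfl⟩
  exact hw.2 x hx

lemma sb_le_uP (x : Z3) (hx : inOm N M x) : sb N lam x ≤ uP N M lam x :=
  le_uP N M lam _ (sb_mem N M lam hN hMN hlam) x hx

lemma SubH_uP : SubH N M (uP N M lam) := by
  intro x hx
  have hKpos := KO_cast_pos N M x hx
  rw [mul_comm, ← le_div_iff₀ hKpos]
  apply csSup_le (PA_nonempty N M lam hN hMN hlam)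
  rintro r ⟨w, hw, rfl⟩
  rw [le_div_iff₀ hKpos, mul_comm]
  calc (KO N M x : ℝ) * w x ≤ ∑ y ∈ (nbrs x).filter (inOm N M), w y := hw.1 x hx
  _ ≤ ∑ y ∈ (nbrs x).filter (inOm N M), uP N M lam y := by
      apply Finset.sum_le_sum
      intro y hy
      exact le_uP N M lam w hw y (Finset.mem_filter.mp hy).2

omit hN hMN hlam in
lemma PA_max (w₁ w₂ : Z3 → ℝ) (h₁ : w₁ ∈ PA N M lam) (h₂ : w₂ ∈ PA N M lam) :
    (fun x => max (w₁ x) (w₂ x)) ∈ PA N M lam := by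
  constructor
  · intro x hx
    rcases max_cases (w₁ x) (w₂ x) with ⟨he, _⟩ | ⟨he, _⟩
    · calc (KO N M x : ℝ) * max (w₁ x) (w₂ x) = (KO N M x : ℝ) * w₁ x := by rw [he]
      _ ≤ ∑ y ∈ (nbrs x).filter (inOm N M), w₁ y := h₁.1 x hx
      _ ≤ ∑ y ∈ (nbrs x).filter (inOm N M), max (w₁ y) (w₂ y) :=
          Finset.sum_le_sum fun y _ => le_max_left _ _
    · calc (KO N M x : ℝ) * max (w₁ x) (w₂ x) = (KO N M x : ℝ) * w₂ x := by rw [he]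
      _ ≤ ∑ y ∈ (nbrs x).filter (inOm N M), w₂ y := h₂.1 x hx
      _ ≤ ∑ y ∈ (nbrs x).filter (inOm N M), max (w₁ y) (w₂ y) :=
          Finset.sum_le_sum fun y _ => le_max_right _ _
  · intro x hx
    exact max_le (h₁.2 x hx) (h₂.2 x hx)

lemma PA_select (T : Finset Z3) (hT : ∀ y ∈ T, inOm N M y) (ε : ℝ) (hε : 0 < ε) :
    ∃ w ∈ PA N M lam, ∀ y ∈ T, uP N M lam y - ε ≤ w y := by
  classical
  induction T using Finset.induction_on with
  | empty => exact ⟨sb N lam, sb_mem N M lam hN hMN hlam, by simp⟩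
  | insert a T' hnotmem ih =>
    obtain ⟨w, hw, hwT⟩ := ih (fun y hy => hT y (Finset.mem_insert_of_mem hy))
    have haOm : inOm N M a := hT a (Finset.mem_insert_self a T')
    have hlt : uP N M lam a - ε < uP N M lam a := by linarith
    obtain ⟨r, hr, hrlt⟩ := exists_lt_of_lt_csSup (PA_nonempty N M lam hN hMN hlam) hlt
    obtain ⟨w', hw', rfl⟩ := hr
    refine ⟨fun x => max (w x) (w' x), PA_max N M lam w w' hw hw', ?_⟩
    intro y hy
    rcases Finset.mem_insert.mp hy with rfl | hy'
    · exact le_trans hrlt.le (le_max_right _ _)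
    · exact le_trans (hwT y hy') (le_max_left _ _)

lemma PA_lift (w : Z3 → ℝ) (hw : w ∈ PA N M lam) (x : Z3) (hx : inOm N M x) :
    (fun z => if z = x then ((KO N M x : ℝ))⁻¹ * ∑ y ∈ (nbrs x).filter (inOm N M), w y
      else w z) ∈ PA N M lam := by
  classical
  have hKpos := KO_cast_pos N M x hx
  set w' := fun z => if z = x then ((KO N M x : ℝ))⁻¹ * ∑ y ∈ (nbrs x).filter (inOm N M), w y
    else w z with hw'
  have hge : ∀ z, w z ≤ w' z := by
    intro z
    by_cases hz : z = x
    · subst hz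
      have h1 : w' z = ((KO N M z : ℝ))⁻¹ * ∑ y ∈ (nbrs z).filter (inOm N M), w y := if_pos rfl
      rw [h1, le_inv_mul_iff₀ hKpos]
      exact hw.1 z hx
    · have h1 : w' z = w z := if_neg hz
      rw [h1]
  constructor
  · intro z hz
    by_cases hzx : z = x
    · subst hzx
      have : w' z = ((KO N M z : ℝ))⁻¹ * ∑ y ∈ (nbrs z).filter (inOm N M), w y := if_pos rfl
      rw [this, mul_inv_cancel_left₀ (ne_of_gt hKpos)]
      exact Finset.sum_le_sum fun y _ => hge y
    · have : w' z = w z := if_neg hzx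
      rw [this]
      calc (KO N M z : ℝ) * w z ≤ ∑ y ∈ (nbrs z).filter (inOm N M), w y := hw.1 z hz
      _ ≤ ∑ y ∈ (nbrs z).filter (inOm N M), w' y := Finset.sum_le_sum fun y _ => hge y
  · intro z hz
    by_cases hzx : z = x
    · subst hzx
      have heq : w' z = ((KO N M z : ℝ))⁻¹ * ∑ y ∈ (nbrs z).filter (inOm N M), w y := if_pos rfl
      rw [heq, inv_mul_le_iff₀ hKpos]
      calc ∑ y ∈ (nbrs z).filter (inOm N M), w y
          ≤ ∑ y ∈ (nbrs z).filter (inOm N M), Sb N lam y :=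
            Finset.sum_le_sum fun y hy => hw.2 y (Finset.mem_filter.mp hy).2
      _ ≤ (KO N M z : ℝ) * Sb N lam z := SupH_Sb N M lam hN hMN hlam z hz
    · have : w' z = w z := if_neg hzx
      rw [this]; exact hw.2 z hz

lemma HarmZ_uP : HarmZ N M (uP N M lam) := by
  intro x hx
  have hKpos := KO_cast_pos N M x hx
  refine le_antisymm (SubH_uP N M lam hN hMN hlam x hx) ?_
  have key : ∀ ε : ℝ, 0 < ε →
      ∑ y ∈ (nbrs x).filter (inOm N M), uP N M lam y
        ≤ (KO N M x : ℝ) * uP N M lam x + (KO N M x : ℝ) * ε := by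
    intro ε hε
    obtain ⟨w, hw, hwT⟩ := PA_select N M lam hN hMN hlam ((nbrs x).filter (inOm N M))
      (fun y hy => (Finset.mem_filter.mp hy).2) ε hε
    have hlift := PA_lift N M lam hN hMN hlam w hw x hx
    have hup : ((KO N M x : ℝ))⁻¹ * ∑ y ∈ (nbrs x).filter (inOm N M), w y ≤ uP N M lam x := by
      have := le_uP N M lam _ hlift x hx
      simpa using this
    have hsum : ∑ y ∈ (nbrs x).filter (inOm N M), uP N M lam y
        ≤ (∑ y ∈ (nbrs x).filter (inOm N M), w y) + (KO N M x : ℝ) * ε := by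
      have : ∑ y ∈ (nbrs x).filter (inOm N M), uP N M lam y
          ≤ ∑ y ∈ (nbrs x).filter (inOm N M), (w y + ε) := by
        apply Finset.sum_le_sum
        intro y hy
        have := hwT y hy
        linarith
      rw [Finset.sum_add_distrib, Finset.sum_const] at this
      calc ∑ y ∈ (nbrs x).filter (inOm N M), uP N M lam y
          ≤ (∑ y ∈ (nbrs x).filter (inOm N M), w y)
            + ((nbrs x).filter (inOm N M)).card • ε := this
      _ = (∑ y ∈ (nbrs x).filter (inOm N M), w y) + (KO N M x : ℝ) * ε := by
          rw [nsmul_eq_mul, KO]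
    calc ∑ y ∈ (nbrs x).filter (inOm N M), uP N M lam y
        ≤ (∑ y ∈ (nbrs x).filter (inOm N M), w y) + (KO N M x : ℝ) * ε := hsum
    _ ≤ (KO N M x : ℝ) * uP N M lam x + (KO N M x : ℝ) * ε := by
        have : ∑ y ∈ (nbrs x).filter (inOm N M), w y ≤ (KO N M x : ℝ) * uP N M lam x := by
          rw [← inv_mul_le_iff₀ hKpos] at *
          exact hup
        linarith
  by_contra hcon
  push_neg at hcon
  set D := ∑ y ∈ (nbrs x).filter (inOm N M), uP N M lam y - (KO N M x : ℝ) * uP N M lam x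
    with hD
  have hDpos : 0 < D := by rw [hD]; linarith
  have := key (D / (2 * (KO N M x : ℝ))) (by positivity)
  rw [hD] at this
  have h2 : (KO N M x : ℝ) * (D / (2 * (KO N M x : ℝ))) = D / 2 := by
    field_simp
  rw [h2] at this
  linarith
end Perron

/-! ### uniqueness via the maximum principle at infinity -/

lemma prop_step (N M : ℕ) (v : Z3 → ℝ) (hv : HarmZ N M v) (S : ℝ)
    (hS : ∀ z, inOm N M z → v z ≤ S) (x y : Z3) (hx : inOm N M x)
    (hy : y ∈ (nbrs x).filter (inOm N M)) : S - v y ≤ 6 * (S - v x) := by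
  have hsum := hv x hx
  have hsplit : v y + ∑ z ∈ ((nbrs x).filter (inOm N M)).erase y, v z
      = ∑ z ∈ (nbrs x).filter (inOm N M), v z := Finset.add_sum_erase _ v hy
  have hcard : (((nbrs x).filter (inOm N M)).erase y).card = KO N M x - 1 := by
    rw [Finset.card_erase_of_mem hy]; rfl
  have herase : ∑ z ∈ ((nbrs x).filter (inOm N M)).erase y, v z
      ≤ ((KO N M x : ℝ) - 1) * S := by
    have hb := Finset.sum_le_card_nsmul (((nbrs x).filter (inOm N M)).erase y) v S
      (fun z hz => hS z (Finset.mem_filter.mp (Finset.mem_of_mem_erase hz)).2)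
    rw [hcard, nsmul_eq_mul] at hb
    have hK1 : 1 ≤ KO N M x := KO_pos N M x hx
    have : ((KO N M x - 1 : ℕ) : ℝ) = (KO N M x : ℝ) - 1 := by
      push_cast [hK1]; ring
    calc ∑ z ∈ ((nbrs x).filter (inOm N M)).erase y, v z
        ≤ ((KO N M x - 1 : ℕ) : ℝ) * S := hb
    _ = ((KO N M x : ℝ) - 1) * S := by rw [this]
  have hvx : v x ≤ S := hS x hx
  have hK6 : (KO N M x : ℝ) ≤ 6 := by exact_mod_cast KO_le6 N M x
  have hK1 : (1:ℝ) ≤ (KO N M x : ℝ) := by exact_mod_cast KO_pos N M x hx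
  nlinarith [mul_nonneg (by linarith : (0:ℝ) ≤ 6 - (KO N M x : ℝ))
    (by linarith : (0:ℝ) ≤ S - v x)]

lemma chain_right (N M : ℕ) (v : Z3 → ℝ) (hv : HarmZ N M v) (S : ℝ)
    (hS : ∀ z, inOm N M z → v z ≤ S) :
    ∀ (j : ℕ) (x : Z3), inOm N M x → -(N:ℤ) < x.1 →
      ∃ y : Z3, inOm N M y ∧ y.1 = x.1 + j ∧ S - v y ≤ 6^j * (S - v x) := by
  intro j
  induction j with
  | zero => intro x hx _; exact ⟨x, hx, by simp, by simp⟩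
  | succ n ih =>
    intro x hx h
    have hmem := mem_flt_n1 N M x hx h
    have hx1 : inOm N M (n1 x) := (Finset.mem_filter.mp hmem).2
    have hstep := prop_step N M v hv S hS x (n1 x) hx hmem
    obtain ⟨y, hy, hyl, hyb⟩ := ih (n1 x) hx1 (by simp only [n1]; omega)
    refine ⟨y, hy, ?_, ?_⟩
    · simp only [n1] at hyl; push_cast [hyl]; push_cast; ring
    · calc S - v y ≤ 6^n * (S - v (n1 x)) := hyb
      _ ≤ 6^n * (6 * (S - v x)) := mul_le_mul_of_nonneg_left hstep (by positivity)
      _ = 6^(n+1) * (S - v x) := by ring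

lemma chain_left (N M : ℕ) (v : Z3 → ℝ) (hv : HarmZ N M v) (S : ℝ)
    (hS : ∀ z, inOm N M z → v z ≤ S) :
    ∀ (j : ℕ) (x : Z3), inOm N M x → x.1 ≤ -(N:ℤ) →
      ∃ y : Z3, inOm N M y ∧ y.1 = x.1 - j ∧ S - v y ≤ 6^j * (S - v x) := by
  intro j
  induction j with
  | zero => intro x hx _; exact ⟨x, hx, by simp, by simp⟩
  | succ n ih =>
    intro x hx h
    have hmem := mem_flt_n2 N M x hx h
    have hx1 : inOm N M (n2 x) := (Finset.mem_filter.mp hmem).2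
    have hstep := prop_step N M v hv S hS x (n2 x) hx hmem
    obtain ⟨y, hy, hyl, hyb⟩ := ih (n2 x) hx1 (by simp only [n2]; omega)
    refine ⟨y, hy, ?_, ?_⟩
    · simp only [n2] at hyl; push_cast [hyl]; push_cast; ring
    · calc S - v y ≤ 6^n * (S - v (n2 x)) := hyb
      _ ≤ 6^n * (6 * (S - v x)) := mul_le_mul_of_nonneg_left hstep (by positivity)
      _ = 6^(n+1) * (S - v x) := by ring

lemma uniq_nonpos (N M : ℕ) (hN : 1 ≤ N) (v : Z3 → ℝ) (hv : HarmZ N M v) (C : ℝ)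
    (hC : ∀ x, inOm N M x → v x ≤ C)
    (hbd : ∀ δ : ℝ, 0 < δ → ∃ K : ℤ, (N:ℤ) ≤ K ∧
      ∀ x, inOm N M x → (K ≤ x.1 ∨ x.1 ≤ -K) → v x ≤ δ) :
    ∀ x, inOm N M x → v x ≤ 0 := by
  have hx00 : inOm N M ((N:ℤ), 0, 0) := by rw [inOm_iff]; right; left; simp
  set E : Set ℝ := v '' {x : Z3 | inOm N M x} with hE
  have hne : E.Nonempty := ⟨v ((N:ℤ), 0, 0), Set.mem_image_of_mem v hx00⟩
  have hbdd : BddAbove E := by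
    refine ⟨C, ?_⟩
    rintro r ⟨x, hx, rfl⟩
    exact hC x hx
  set S := sSup E with hS
  have hvle : ∀ x, inOm N M x → v x ≤ S := fun x hx =>
    le_csSup hbdd (Set.mem_image_of_mem v hx)
  have hkey : ∀ δ : ℝ, 0 < δ → S ≤ δ := by
    intro δ hδ
    obtain ⟨K, hKN, hKsmall⟩ := hbd δ hδ
    have hA1 : (1:ℝ) ≤ 6^((2*K).toNat) := one_le_pow₀ (by norm_num)
    have hApos : (0:ℝ) < 6^((2*K).toNat) := by positivity
    have H : ∀ ε : ℝ, 0 < ε → S ≤ δ + 6^((2*K).toNat) * ε := by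
      intro ε hε
      obtain ⟨r, hr, hrgt⟩ := exists_lt_of_lt_csSup hne (by linarith : S - ε < S)
      obtain ⟨x₀, hx₀, rfl⟩ := hr
      by_cases hfar : K ≤ x₀.1 ∨ x₀.1 ≤ -K
      · have := hKsmall x₀ hx₀ hfar
        nlinarith
      · push_neg at hfar
        obtain ⟨hfar1, hfar2⟩ := hfar
        have hvx₀ : S - v x₀ ≤ ε := by linarith
        have hvx₀' : 0 ≤ S - v x₀ := by linarith [hvle x₀ hx₀]
        rcases le_or_gt x₀.1 (-(N:ℤ)) with hleft | hright
        · set j := (x₀.1 + K).toNat with hj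
          have hj' : (j:ℤ) = x₀.1 + K := Int.toNat_of_nonneg (by omega)
          obtain ⟨y, hy, hyl, hyb⟩ := chain_left N M v hv S hvle j x₀ hx₀ hleft
          have hyK : y.1 ≤ -K := by omega
          have hvy : v y ≤ δ := hKsmall y hy (Or.inr hyK)
          have hjle : j ≤ (2*K).toNat := by omega
          have hpow : (6:ℝ)^j ≤ 6^((2*K).toNat) := pow_le_pow_right₀ (by norm_num) hjle
          have : S - v y ≤ 6^((2*K).toNat) * ε := by
            calc S - v y ≤ 6^j * (S - v x₀) := hyb
            _ ≤ 6^((2*K).toNat) * ε := by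
                apply mul_le_mul hpow hvx₀ hvx₀' (by positivity)
          linarith
        · set j := (K - x₀.1).toNat with hj
          have hj' : (j:ℤ) = K - x₀.1 := Int.toNat_of_nonneg (by omega)
          obtain ⟨y, hy, hyl, hyb⟩ := chain_right N M v hv S hvle j x₀ hx₀ hright
          have hyK : K ≤ y.1 := by omega
          have hvy : v y ≤ δ := hKsmall y hy (Or.inl hyK)
          have hjle : j ≤ (2*K).toNat := by omega
          have hpow : (6:ℝ)^j ≤ 6^((2*K).toNat) := pow_le_pow_right₀ (by norm_num) hjle
          have : S - v y ≤ 6^((2*K).toNat) * ε := by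
            calc S - v y ≤ 6^j * (S - v x₀) := hyb
            _ ≤ 6^((2*K).toNat) * ε := by
                apply mul_le_mul hpow hvx₀ hvx₀' (by positivity)
          linarith
    refine le_of_forall_pos_le_add ?_
    intro ε hε
    have := H (ε / 6^((2*K).toNat)) (by positivity)
    calc S ≤ δ + 6^((2*K).toNat) * (ε / 6^((2*K).toNat)) := this
    _ = δ + ε := by field_simp
  intro x hx
  have hS0 : S ≤ 0 := by
    refine le_of_forall_pos_le_add ?_
    intro ε hε
    simpa using hkey ε hε
  exact le_trans (hvle x hx) hS0

/-! ### boundary estimates and existence -/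

lemma cc_fb_le (N : ℕ) (hN : 1 ≤ N) (d : ℝ) (hd : 0 < d) (x : Z3)
    (hq1 : 1 ≤ qz x) (hq : (cc N / d)^(4:ℕ) ≤ (qz x : ℝ)) : cc N * fb x ≤ d := by
  have hβ : 0 < cc N / d := div_pos (cc_pos N hN) hd
  have hqR : (0:ℝ) < (qz x : ℝ) := by exact_mod_cast hq1
  have h1 : ((cc N / d)^(4:ℕ)) ^ ((1:ℝ)/4) = cc N / d := by
    rw [← Real.rpow_natCast (cc N / d) 4, ← Real.rpow_mul hβ.le]
    norm_num
  have hmono : ((cc N / d)^(4:ℕ)) ^ ((1:ℝ)/4) ≤ ((qz x : ℝ)) ^ ((1:ℝ)/4) :=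
    Real.rpow_le_rpow (by positivity) hq (by norm_num)
  rw [h1] at hmono
  have hfb : fb x = (((qz x : ℝ)) ^ ((1:ℝ)/4))⁻¹ := by
    rw [fb, ← Real.rpow_neg hqR.le]
  have hpows : (0:ℝ) < ((qz x : ℝ)) ^ ((1:ℝ)/4) := Real.rpow_pos_of_pos hqR _
  rw [hfb]
  rw [mul_inv_le_iff₀ hpows]
  calc cc N = (cc N / d) * d := by field_simp
  _ ≤ ((qz x : ℝ)) ^ ((1:ℝ)/4) * d := by nlinarith
  _ = d * ((qz x : ℝ)) ^ ((1:ℝ)/4) := by ring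

lemma Phi_small (N : ℕ) (hN : 1 ≤ N) (d : ℝ) (hd : 0 < d) :
    ∃ K : ℤ, (N:ℤ) ≤ K ∧ ∀ x : Z3, K ≤ x.1 → Phi N x ≤ d := by
  refine ⟨max (N:ℤ) (⌈(cc N / d)^(2:ℕ)⌉ + 1), le_max_left _ _, ?_⟩
  intro x hx
  have hK1 : (1:ℤ) ≤ max (N:ℤ) (⌈(cc N / d)^(2:ℕ)⌉ + 1) := by
    have : (1:ℤ) ≤ (N:ℤ) := by exact_mod_cast hN
    omega
  have hx1 : 1 ≤ x.1 := le_trans hK1 hx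
  have hq1 : 1 ≤ qz x := qz_pos_of x hx1
  have hβ : 0 < cc N / d := div_pos (cc_pos N hN) hd
  have hceil : ((cc N / d)^(2:ℕ) : ℝ) ≤ ((⌈(cc N / d)^(2:ℕ)⌉ + 1 : ℤ) : ℝ) := by
    push_cast
    linarith [Int.le_ceil ((cc N / d)^(2:ℕ))]
  have hxr : ((cc N / d)^(2:ℕ) : ℝ) ≤ (x.1 : ℝ) := by
    calc ((cc N / d)^(2:ℕ) : ℝ) ≤ ((⌈(cc N / d)^(2:ℕ)⌉ + 1 : ℤ) : ℝ) := hceil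
    _ ≤ (x.1 : ℝ) := by exact_mod_cast le_trans (le_max_right _ _) hx
  have hq4 : (cc N / d)^(4:ℕ) ≤ (qz x : ℝ) := by
    have hqx : (x.1:ℝ)^(2:ℕ) ≤ (qz x : ℝ) := by
      have : (x.1^2 : ℤ) ≤ qz x := by
        simp only [qz]; nlinarith [sq_nonneg x.2.1, sq_nonneg x.2.2]
      exact_mod_cast this
    calc (cc N / d)^(4:ℕ) = ((cc N / d)^(2:ℕ))^(2:ℕ) := by ring
    _ ≤ (x.1:ℝ)^(2:ℕ) := by
        apply pow_le_pow_left₀ (by positivity) hxr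
    _ ≤ (qz x : ℝ) := hqx
  have := cc_fb_le N hN d hd x hq1 hq4
  rw [Phi, if_neg (by omega)]
  exact le_trans (min_le_right _ _) this

lemma exists_pos (N M : ℕ) (hN : 1 ≤ N) (hMN : M ≤ N) (lam : ℝ) (hlam : 0 < lam) :
    ∃ w : Z3 → ℝ, HarmZ N M w ∧ (∀ x, inOm N M x → |w x| ≤ |lam|) ∧
      (∀ δ : ℝ, 0 < δ → ∃ K : ℤ, (N:ℤ) ≤ K ∧
        (∀ x, inOm N M x → x.1 ≤ -K → |w x - lam| ≤ δ) ∧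
        (∀ x, inOm N M x → K ≤ x.1 → |w x + lam| ≤ δ)) := by
  refine ⟨uP N M lam, HarmZ_uP N M lam hN hMN hlam, ?_, ?_⟩
  · intro x hx
    rw [abs_of_pos hlam, abs_le]
    constructor
    · linarith [sb_le_uP N M lam hN hMN hlam x hx, sb_ge N lam hN hlam x]
    · linarith [uP_le_Sb N M lam hN hMN hlam x hx, Sb_le N lam hN hlam x]
  · intro δ hδ
    have hd : 0 < δ / (2*lam) := by positivity
    obtain ⟨K, hKN, hKsmall⟩ := Phi_small N hN (δ / (2*lam)) hd
    have hN1 : (1:ℤ) ≤ (N:ℤ) := by exact_mod_cast hN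
    refine ⟨K, hKN, ?_, ?_⟩
    · intro x hx hxl
      have hx0 : x.1 ≤ 0 := by omega
      have hPhix : Phi N x = 1 := if_pos hx0
      have hup : uP N M lam x ≤ lam := by
        have := uP_le_Sb N M lam hN hMN hlam x hx
        rw [Sb, hPhix] at this
        linarith
      have hsig1 : K ≤ (sig x).1 := by simp only [sig]; omega
      have hPhis : Phi N (sig x) ≤ δ / (2*lam) := hKsmall (sig x) hsig1
      have hlow : lam - δ ≤ uP N M lam x := by
        have h1 := sb_le_uP N M lam hN hMN hlam x hx
        rw [sb_eq] at h1
        have h2 : lam - 2*lam * (δ / (2*lam)) ≤ lam - 2*lam * Phi N (sig x) := by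
          nlinarith
        have h3 : lam - 2*lam * (δ / (2*lam)) = lam - δ := by field_simp
        linarith
      rw [abs_le]
      constructor <;> linarith
    · intro x hx hxr
      have hx1 : 1 ≤ x.1 := by omega
      have hPhis : Phi N (sig x) = 1 := if_pos (by simp only [sig]; omega)
      have hlow : -lam ≤ uP N M lam x := by
        have h1 := sb_le_uP N M lam hN hMN hlam x hx
        rw [sb_eq, hPhis] at h1
        linarith
      have hPhix : Phi N x ≤ δ / (2*lam) := hKsmall x hxr
      have hup : uP N M lam x ≤ -lam + δ := by
        have h1 := uP_le_Sb N M lam hN hMN hlam x hx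
        rw [Sb] at h1
        have h2 : 2*lam * Phi N x ≤ 2*lam * (δ / (2*lam)) := by nlinarith
        have h3 : 2*lam * (δ / (2*lam)) = δ := by field_simp
        linarith
      rw [abs_le]
      constructor <;> linarith

lemma exists_sol (N M : ℕ) (hN : 1 ≤ N) (hMN : M ≤ N) (lam : ℝ) (hlam : lam ≠ 0) :
    ∃ w : Z3 → ℝ, HarmZ N M w ∧ (∀ x, inOm N M x → |w x| ≤ |lam|) ∧
      (∀ δ : ℝ, 0 < δ → ∃ K : ℤ, (N:ℤ) ≤ K ∧
        (∀ x, inOm N M x → x.1 ≤ -K → |w x - lam| ≤ δ) ∧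
        (∀ x, inOm N M x → K ≤ x.1 → |w x + lam| ≤ δ)) := by
  rcases hlam.lt_or_gt with hneg | hpos
  · obtain ⟨w, hw1, hw2, hw3⟩ := exists_pos N M hN hMN (-lam) (by linarith)
    refine ⟨fun x => -(w x), ?_, ?_, ?_⟩
    · intro x hx
      have := hw1 x hx
      rw [mul_neg, this, ← Finset.sum_neg_distrib]
    · intro x hx
      rw [abs_neg]
      simpa [abs_neg] using hw2 x hx
    · intro δ hδ
      obtain ⟨K, hKN, hl, hr⟩ := hw3 δ hδ
      refine ⟨K, hKN, ?_, ?_⟩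
      · intro x hx hxl
        have h := hl x hx hxl
        rw [show -(w x) - lam = -(w x - (-lam)) by ring, abs_neg]
        exact h
      · intro x hx hxr
        have h := hr x hx hxr
        rw [show -(w x) + lam = -(w x + (-lam)) by ring, abs_neg]
        exact h
  · exact exists_pos N M hN hMN lam hpos

/-! ### bridging to subtype functions -/

noncomputable def ext (N M : ℕ) (u : OmT N M → ℝ) : Z3 → ℝ :=
  fun z => if h : inOm N M z then u ⟨z, h⟩ else 0

lemma sum_attach_ext (N M : ℕ) (u : OmT N M → ℝ) (x : Z3) :
    ∑ y ∈ ((nbrs x).filter (inOm N M)).attach,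
        u ⟨(y : Z3), (Finset.mem_filter.mp y.2).2⟩
      = ∑ y ∈ (nbrs x).filter (inOm N M), ext N M u y := by
  rw [← Finset.sum_attach ((nbrs x).filter (inOm N M)) (ext N M u)]
  apply Finset.sum_congr rfl
  intro y _
  rw [ext, dif_pos ((Finset.mem_filter.mp y.2).2)]

lemma harm_ext (N M : ℕ) (u : OmT N M → ℝ) (hu : Harmonic N M u) : HarmZ N M (ext N M u) := by
  intro x hx
  have h := hu ⟨x, hx⟩
  rw [sum_attach_ext] at h
  have he : ext N M u x = u ⟨x, hx⟩ := dif_pos hx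
  rw [he]
  exact h

lemma harm_toSub (N M : ℕ) (w : Z3 → ℝ) (hw : HarmZ N M w) :
    Harmonic N M (fun t => w t.1) := by
  intro x
  have h := hw x.1 x.2
  calc (KO N M (x : Z3) : ℝ) * w x.1
      = ∑ y ∈ (nbrs (x:Z3)).filter (inOm N M), w y := h
  _ = ∑ y ∈ ((nbrs (x:Z3)).filter (inOm N M)).attach, w y.1 :=
      (Finset.sum_attach _ w).symm

lemma sub_uniq (N M : ℕ) (hN : 1 ≤ N) (lam : ℝ) (u1 u2 : OmT N M → ℝ)
    (hH1 : Harmonic N M u1) (hH2 : Harmonic N M u2)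
    (hB1 : BddFun N M u1) (hB2 : BddFun N M u2)
    (hV1 : BdryVals lam N M u1) (hV2 : BdryVals lam N M u2) : u1 = u2 := by
  obtain ⟨C1, hC1⟩ := hB1
  obtain ⟨C2, hC2⟩ := hB2
  have key : ∀ (a b : OmT N M → ℝ), Harmonic N M a → Harmonic N M b →
      (∀ t, |a t| ≤ C1 + C2) → (∀ t, |b t| ≤ C1 + C2) →
      BdryVals lam N M a → BdryVals lam N M b →
      ∀ x, inOm N M x → ext N M a x - ext N M b x ≤ 0 := by
    intro a b hHa hHb hBa hBb hVa hVb
    apply uniq_nonpos N M hN _ ?_ (C1 + C2 + C1 + C2) ?_ ?_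
    · intro x hx
      have h1 := harm_ext N M a hHa x hx
      have h2 := harm_ext N M b hHb x hx
      rw [mul_sub, h1, h2, ← Finset.sum_sub_distrib]
    · intro x hx
      have h1 : |ext N M a x| ≤ C1 + C2 := by
        rw [ext, dif_pos hx]; exact hBa ⟨x, hx⟩
      have h2 : |ext N M b x| ≤ C1 + C2 := by
        rw [ext, dif_pos hx]; exact hBb ⟨x, hx⟩
      have ha := abs_le.mp h1
      have hb := abs_le.mp h2
      linarith [ha.1, ha.2, hb.1, hb.2]
    · intro δ hδ
      obtain ⟨K1, hV1l, hV1r⟩ := hVa (δ/2) (by linarith)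
      obtain ⟨K2, hV2l, hV2r⟩ := hVb (δ/2) (by linarith)
      refine ⟨max (N:ℤ) (max K1 K2), le_max_left _ _, ?_⟩
      intro x hx hfar
      have hea : ext N M a x = a ⟨x, hx⟩ := dif_pos hx
      have heb : ext N M b x = b ⟨x, hx⟩ := dif_pos hx
      rcases hfar with hr | hl
      · have h1 := hV1r ⟨x, hx⟩ (by simp only []; omega)
        have h2 := hV2r ⟨x, hx⟩ (by simp only []; omega)
        rw [abs_le] at h1 h2
        rw [hea, heb]
        obtain ⟨h1a, h1b⟩ := h1
        obtain ⟨h2a, h2b⟩ := h2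
        linarith
      · have h1 := hV1l ⟨x, hx⟩ (by simp only []; omega)
        have h2 := hV2l ⟨x, hx⟩ (by simp only []; omega)
        rw [abs_le] at h1 h2
        rw [hea, heb]
        obtain ⟨h1a, h1b⟩ := h1
        obtain ⟨h2a, h2b⟩ := h2
        linarith
  have hbnd1 : ∀ t : OmT N M, |u1 t| ≤ C1 + C2 := by
    intro t
    have := abs_nonneg (u2 t)
    linarith [hC1 t, hC2 t]
  have hbnd2 : ∀ t : OmT N M, |u2 t| ≤ C1 + C2 := by
    intro t
    have := abs_nonneg (u1 t)
    linarith [hC1 t, hC2 t]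
  have h12 := key u1 u2 hH1 hH2 hbnd1 hbnd2 hV1 hV2
  have h21 := key u2 u1 hH2 hH1 hbnd2 hbnd1 hV2 hV1
  funext t
  have ha := h12 t.1 t.2
  have hb := h21 t.1 t.2
  have hea : ext N M u1 t.1 = u1 t := by
    rw [ext, dif_pos t.2]
  have heb : ext N M u2 t.1 = u2 t := by
    rw [ext, dif_pos t.2]
  rw [hea, heb] at ha hb
  linarith

end S17

theorem statement17 (lam α : ℝ) (hlam : lam ≠ 0) (hα : 0 < α) (hα' : α < 1 / 2)
    (N : ℕ) (hN : 1 ≤ N) :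
    ∃! u : OmT N ⌊(N : ℝ) ^ α⌋₊ → ℝ,
      BddFun N ⌊(N : ℝ) ^ α⌋₊ u ∧
        Harmonic N ⌊(N : ℝ) ^ α⌋₊ u ∧
          BdryVals lam N ⌊(N : ℝ) ^ α⌋₊ u := by
  set M := ⌊(N : ℝ) ^ α⌋₊ with hM
  have hN1 : (1:ℝ) ≤ (N:ℝ) := by exact_mod_cast hN
  have hMN : M ≤ N := by
    have h1 : (N:ℝ)^α ≤ (N:ℝ) := by
      calc (N:ℝ)^α ≤ (N:ℝ)^(1:ℝ) :=
        Real.rpow_le_rpow_of_exponent_le hN1 (by linarith)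
      _ = (N:ℝ) := Real.rpow_one _
    calc M = ⌊(N : ℝ) ^ α⌋₊ := hM
    _ ≤ ⌊(N:ℝ)⌋₊ := Nat.floor_le_floor h1
    _ = N := Nat.floor_natCast N
  obtain ⟨w, hwH, hwB, hwBV⟩ := S17.exists_sol N M hN hMN lam hlam
  refine ⟨fun t => w t.1, ⟨⟨|lam|, fun t => hwB t.1 t.2⟩, S17.harm_toSub N M w hwH, ?_⟩, ?_⟩
  · intro δ hδ
    obtain ⟨K, hKN, hl, hr⟩ := hwBV δ hδ
    exact ⟨K, fun t ht => hl t.1 t.2 ht, fun t ht => hr t.1 t.2 ht⟩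
  · rintro u' ⟨hB', hH', hV'⟩
    apply S17.sub_uniq N M hN lam u' (fun t => w t.1) hH' (S17.harm_toSub N M w hwH) hB'
      ⟨|lam|, fun t => hwB t.1 t.2⟩ hV'
    intro δ hδ
    obtain ⟨K, hKN, hl, hr⟩ := hwBV δ hδ
    exact ⟨K, fun t ht => hl t.1 t.2 ht, fun t ht => hr t.1 t.2 ht⟩
end
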